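/- arXiv:1708.03583 — 4 statements merged into one kernel-verified Lean document; each statement's English description precedes it below -/
import Mathlib

section
/- For every n ≥ 1 there exists a Δ⁰₂ set that is (n+1)-c.e. but not n-c.e.; that is, the oscillation (difference) hierarchy restricted to {0,1}-valued functions is proper at every level. -/
/-- `A` is an `n`-c.e. set: it has a computable `{0,1}`-valued approximation
starting at `false`, converging to the characteristic function of `A`, and
changing its value at most `n` times on each argument. -/
def NCE (n : ℕ) (A : Set ℕ) : Prop :=
  ∃ f : ℕ → ℕ → Bool, Computable₂ f ∧ ∀ x,
    f x 0 = false ∧ (∃ s, ∀ t, s ≤ t → (f x t = true ↔ x ∈ A)) ∧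
    {s | f x s ≠ f x (s + 1)}.Finite ∧ {s | f x s ≠ f x (s + 1)}.ncard ≤ n

namespace DH

open Nat.Partrec (Code)
open Nat.Partrec.Code

/-! ## The construction

On input `e`, we simulate the code decoded from `e` as a candidate `n`-c.e.
approximation to our set, and play "one more mind-change" against it: our own
approximation tracks the parity of the number of observed mind-changes of the
opponent (capped at `n`), always staying on the opposite side of a valid
opponent's current value.  This uses at most `n + 1` mind-changes and
diagonalizes against every computable approximation with at most `n`
mind-changes. -/

/-- the code decoded from `e` -/
def cde (e : ℕ) : Code := Denumerable.ofNat Code e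

/-- observed value of opponent `e` on argument `t` at stage `s` -/
def V (e s t : ℕ) : Bool := decide ((evaln s (cde e) (Nat.pair e t)).getD 0 ≠ 0)

/-- the opponent has halted -/
def H (e s t : ℕ) : Prop := (evaln s (cde e) (Nat.pair e t)).isSome = true

instance : ∀ e s t, Decidable (H e s t) := fun _ _ _ => instDecidableEqBool _ _

/-- previous observed value -/
def Vp (e s t : ℕ) : Bool := if t = 0 then false else V e s (t-1)

/-- `t` is an observed change point at stage `s` -/
def chg (e s t : ℕ) : Prop := (∀ t' ≤ t, H e s t') ∧ V e s t ≠ Vp e s t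

instance : ∀ e s t, Decidable (chg e s t) := fun _ _ _ => instDecidableAnd

/-- number of observed changes at stage `s` -/
def m (e s : ℕ) : ℕ := ((Finset.range s).filter (chg e s)).card

/-- observed changes capped at `n` -/
def M (n e s : ℕ) : ℕ := min (m e s) n

/-- our approximation -/
def a (n e s : ℕ) : Bool := if s = 0 then false else decide (Even (M n e s))

/-- the diagonal set -/
def A (n : ℕ) : Set ℕ := {e | ∃ s, ∀ t, s ≤ t → a n e t = true}

/-! ### Monotonicity of the observation process -/

theorem H_mono {e s s' t : ℕ} (h : s ≤ s') (hh : H e s t) : H e s' t := by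
  unfold H at *
  rw [Option.isSome_iff_exists] at *
  obtain ⟨x, hx⟩ := hh
  exact ⟨x, evaln_mono h hx⟩

theorem V_mono {e s s' t : ℕ} (h : s ≤ s') (hh : H e s t) : V e s' t = V e s t := by
  unfold H at hh
  rw [Option.isSome_iff_exists] at hh
  obtain ⟨x, hx⟩ := hh
  unfold V
  rw [hx, evaln_mono h hx]

theorem chg_mono {e s s' t : ℕ} (h : s ≤ s') (hc : chg e s t) : chg e s' t := by
  obtain ⟨h1, h2⟩ := hc
  refine ⟨fun t' ht' => H_mono h (h1 t' ht'), ?_⟩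
  rw [V_mono h (h1 t le_rfl)]
  rcases Nat.eq_zero_or_pos t with rfl | ht
  · simpa [Vp] using h2
  · have : t - 1 ≤ t := Nat.sub_le _ _
    rw [Vp, if_neg (Nat.pos_iff_ne_zero.mp ht), V_mono h (h1 _ this)]
    simpa [Vp, if_neg (Nat.pos_iff_ne_zero.mp ht)] using h2

theorem m_mono (e : ℕ) : Monotone (m e) := by
  intro s s' h
  apply Finset.card_le_card
  intro t ht
  simp only [Finset.mem_filter, Finset.mem_range] at *
  exact ⟨lt_of_lt_of_le ht.1 h, chg_mono h ht.2⟩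

theorem M_mono (n e : ℕ) : Monotone (M n e) := fun _ _ h => min_le_min (m_mono e h) le_rfl

theorem M_le (n e s : ℕ) : M n e s ≤ n := min_le_right _ _

/-! ### Generic lemmas -/

/-- a monotone sequence bounded by `n` is eventually constant -/
theorem mono_bdd_eventually {u : ℕ → ℕ} (hu : Monotone u) {n : ℕ} (hb : ∀ s, u s ≤ n) :
    ∃ s0, ∀ t, s0 ≤ t → u t = u s0 := by
  have hne : (Set.range u).Nonempty := ⟨u 0, 0, rfl⟩
  have hbdd : BddAbove (Set.range u) := ⟨n, by rintro _ ⟨s, rfl⟩; exact hb s⟩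
  obtain ⟨s0, hs0⟩ := Nat.sSup_mem hne hbdd
  refine ⟨s0, fun t ht => le_antisymm ?_ (hu ht)⟩
  rw [hs0]
  exact le_csSup hbdd ⟨t, rfl⟩

/-- the set of strict-increase points of a monotone sequence bounded by `n` is finite
with at most `n` elements -/
theorem incr_points {u : ℕ → ℕ} (hu : Monotone u) {n : ℕ} (hb : ∀ s, u s ≤ n) :
    {s | u s ≠ u (s+1)}.Finite ∧ {s | u s ≠ u (s+1)}.ncard ≤ n := by
  set S := {s | u s ≠ u (s+1)} with hS
  have hmaps : Set.MapsTo u S (Set.Iio n) := by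
    intro s hs
    have h1 : u s < u (s+1) := lt_of_le_of_ne (hu (Nat.le_succ s)) hs
    exact lt_of_lt_of_le h1 (hb (s+1))
  have hinj : Set.InjOn u S := by
    intro s hs t ht hst
    by_contra hne
    rcases Nat.lt_or_ge s t with h | h
    · have h1 : u (s+1) ≤ u t := hu h
      have h2 : u s < u (s+1) := lt_of_le_of_ne (hu (Nat.le_succ s)) hs
      omega
    · have h' : t < s := lt_of_le_of_ne h (Ne.symm hne)
      have h1 : u (t+1) ≤ u s := hu h'
      have h2 : u t < u (t+1) := lt_of_le_of_ne (hu (Nat.le_succ t)) ht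
      omega
  have hfin : S.Finite := Set.Finite.of_finite_image
    ((Set.finite_Iio n).subset (Set.image_subset_iff.mpr hmaps)) hinj
  constructor
  · exact hfin
  · calc S.ncard ≤ (Set.Iio n).ncard := Set.ncard_le_ncard_of_injOn u hmaps hinj (Set.finite_Iio n)
    _ = n := by
      rw [show (Set.Iio n) = ↑(Finset.Iio n) by simp, Set.ncard_coe_finset, Nat.card_Iio]

/-- parity lemma for boolean sequences starting at `false` -/
theorem bool_parity (v : ℕ → Bool) (h0 : v 0 = false) (t : ℕ) :
    v t = decide (Odd ((Finset.range t).filter (fun u => v u ≠ v (u+1))).card) := by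
  induction t with
  | zero => simp [h0]
  | succ t ih =>
    rw [Finset.range_add_one, Finset.filter_insert]
    by_cases h : v t ≠ v (t+1)
    · rw [if_pos h, Finset.card_insert_of_notMem (by simp)]
      rcases Bool.eq_false_or_eq_true (v t) with h1 | h1 <;>
        rcases Bool.eq_false_or_eq_true (v (t+1)) with h2 | h2 <;>
        simp_all [Nat.odd_add_one, Nat.even_add_one]
    · rw [if_neg h]
      push_neg at h
      rw [← h, ih]

/-! ### Properties of the approximation `a` -/

theorem conv (n e : ℕ) : ∃ s, 0 < s ∧ (∀ t, s ≤ t → a n e t = a n e s) ∧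
    (a n e s = true ↔ e ∈ A n) := by
  obtain ⟨s0, hs0⟩ := mono_bdd_eventually (M_mono n e) (M_le n e)
  refine ⟨s0 + 1, Nat.succ_pos _, ?_, ?_⟩
  · intro t ht
    have h1 : M n e t = M n e s0 := hs0 t (by omega)
    have h2 : M n e (s0+1) = M n e s0 := hs0 _ (by omega)
    simp [a, Nat.pos_iff_ne_zero.mp (show 0 < t by omega), h1, h2]
  · constructor
    · intro h
      refine ⟨s0 + 1, fun t ht => ?_⟩
      have h1 : M n e t = M n e s0 := hs0 t (by omega)
      have h2 : M n e (s0+1) = M n e s0 := hs0 _ (by omega)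
      simp only [a, if_neg (show t ≠ 0 by omega)] at *
      rw [h1, ← h2]; exact h
    · rintro ⟨s', hs'⟩
      have h1 : M n e (max (s0+1) s') = M n e s0 := hs0 _ (by omega)
      have h2 : M n e (s0+1) = M n e s0 := hs0 _ (by omega)
      have := hs' (max (s0+1) s') (le_max_right _ _)
      simp only [a, if_neg (show max (s0+1) s' ≠ 0 by omega)] at this
      simp only [a, if_neg (show s0+1 ≠ 0 by omega)]
      rw [h2, ← h1]; exact this

theorem a_changes (n e : ℕ) : {s | a n e s ≠ a n e (s+1)}.Finite ∧
    {s | a n e s ≠ a n e (s+1)}.ncard ≤ n + 1 := by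
  obtain ⟨hfin, hcard⟩ := incr_points (M_mono n e) (M_le n e)
  have hsub : {s | a n e s ≠ a n e (s+1)} ⊆ {0} ∪ {s | M n e s ≠ M n e (s+1)} := by
    intro s hs
    rcases Nat.eq_zero_or_pos s with rfl | hpos
    · exact Or.inl rfl
    · right
      simp only [Set.mem_setOf_eq, a, if_neg (Nat.pos_iff_ne_zero.mp hpos),
        if_neg (Nat.succ_ne_zero s)] at hs
      intro hM
      exact hs (by rw [hM])
  have hfin' : ({0} ∪ {s | M n e s ≠ M n e (s+1)} : Set ℕ).Finite :=
    (Set.finite_singleton 0).union hfin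
  refine ⟨hfin'.subset hsub, ?_⟩
  calc {s | a n e s ≠ a n e (s+1)}.ncard
      ≤ ({0} ∪ {s | M n e s ≠ M n e (s+1)} : Set ℕ).ncard := Set.ncard_le_ncard hsub hfin'
    _ ≤ ({0} : Set ℕ).ncard + {s | M n e s ≠ M n e (s+1)}.ncard := Set.ncard_union_le _ _
    _ ≤ 1 + n := by simpa using add_le_add_left hcard 1
    _ = n + 1 := by omega

/-! ### Computability of the approximation -/

/-- Finset filter card as list filterMap length -/
theorem card_filter_eq (s : ℕ) (p : ℕ → Prop) [DecidablePred p] :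
    ((Finset.range s).filter p).card =
      ((List.range s).filterMap (fun t => if p t then some t else none)).length := by
  induction s with
  | zero => simp
  | succ s ih =>
    rw [Finset.range_add_one, Finset.filter_insert, List.range_succ, List.filterMap_append]
    by_cases h : p s
    · rw [if_pos h, Finset.card_insert_of_notMem (by simp), List.length_append, ih]
      simp [h]
    · rw [if_neg h, List.length_append, ih]
      simp [h]

theorem hevaln : Primrec fun x : (ℕ × ℕ) × ℕ =>
    evaln x.1.2 (cde x.1.1) (Nat.pair x.1.1 x.2) := by
  have := primrec_evaln.comp (Primrec.pair
    (Primrec.pair (Primrec.snd.comp Primrec.fst)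
      ((Primrec.ofNat Code).comp (Primrec.fst.comp Primrec.fst)))
    (Primrec₂.natPair.comp (Primrec.fst.comp Primrec.fst) Primrec.snd))
  exact this

theorem hH : PrimrecPred fun x : (ℕ × ℕ) × ℕ => H x.1.1 x.1.2 x.2 := by
  have : PrimrecPred fun x : (ℕ × ℕ) × ℕ =>
      (evaln x.1.2 (cde x.1.1) (Nat.pair x.1.1 x.2)).isSome = true :=
    Primrec.eq.comp (Primrec.option_isSome.comp hevaln) (Primrec.const true)
  exact this.of_eq fun x => Iff.rfl

theorem hV : Primrec fun x : (ℕ × ℕ) × ℕ => V x.1.1 x.1.2 x.2 := by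
  have h1 : PrimrecPred fun x : (ℕ × ℕ) × ℕ =>
      (evaln x.1.2 (cde x.1.1) (Nat.pair x.1.1 x.2)).getD 0 ≠ 0 :=
    PrimrecPred.not (Primrec.eq.comp (Primrec.option_getD.comp hevaln (Primrec.const 0))
      (Primrec.const 0))
  exact (h1.of_eq fun x => Iff.rfl).decide

theorem hVp : Primrec fun x : (ℕ × ℕ) × ℕ => Vp x.1.1 x.1.2 x.2 := by
  unfold Vp
  exact Primrec.ite (Primrec.eq.comp Primrec.snd (Primrec.const 0)) (Primrec.const false)
    (hV.comp (Primrec.pair Primrec.fst (Primrec.pred.comp Primrec.snd)))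

theorem hPfx : PrimrecPred fun x : (ℕ × ℕ) × ℕ => ∀ t' ≤ x.2, H x.1.1 x.1.2 t' := by
  have hinner : Primrec₂ fun (x : (ℕ × ℕ) × ℕ) (u : ℕ) =>
      if H x.1.1 x.1.2 u then (none : Option ℕ) else some u := by
    have hHc : PrimrecPred fun y : ((ℕ × ℕ) × ℕ) × ℕ => H y.1.1.1 y.1.1.2 y.2 :=
      hH.comp (Primrec.pair (Primrec.fst.comp Primrec.fst) Primrec.snd)
    exact Primrec.ite hHc (Primrec.const none) (Primrec.option_some.comp Primrec.snd)
  have hlen : Primrec fun x : (ℕ × ℕ) × ℕ =>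
      ((List.range (x.2+1)).filterMap
        (fun u => if H x.1.1 x.1.2 u then (none : Option ℕ) else some u)).length :=
    Primrec.list_length.comp
      (Primrec.listFilterMap (Primrec.list_range.comp (Primrec.succ.comp Primrec.snd)) hinner)
  have h0 : PrimrecPred fun x : (ℕ × ℕ) × ℕ =>
      ((List.range (x.2+1)).filterMap
        (fun u => if H x.1.1 x.1.2 u then (none : Option ℕ) else some u)).length = 0 :=
    Primrec.eq.comp hlen (Primrec.const 0)
  apply h0.of_eq
  intro x
  rw [List.length_eq_zero_iff, List.filterMap_eq_nil_iff]
  constructor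
  · intro h t' ht'
    have := h t' (by rw [List.mem_range]; omega)
    by_contra hn
    rw [if_neg hn] at this
    exact Option.some_ne_none _ this
  · intro h u hu
    rw [List.mem_range] at hu
    rw [if_pos (h u (by omega))]

theorem hchg : PrimrecPred fun x : (ℕ × ℕ) × ℕ => chg x.1.1 x.1.2 x.2 := by
  have hne : PrimrecPred fun x : (ℕ × ℕ) × ℕ => V x.1.1 x.1.2 x.2 ≠ Vp x.1.1 x.1.2 x.2 :=
    PrimrecPred.not (Primrec.eq.comp hV hVp)
  exact (hPfx.and hne).of_eq fun x => Iff.rfl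

theorem hm : Primrec₂ m := by
  have hlist : Primrec fun p : ℕ × ℕ =>
      ((List.range p.2).filterMap (fun t => if chg p.1 p.2 t then some t else none)).length := by
    have hinner : Primrec₂ fun (p : ℕ × ℕ) (t : ℕ) =>
        if chg p.1 p.2 t then some t else (none : Option ℕ) :=
      Primrec.ite hchg (Primrec.option_some.comp Primrec.snd) (Primrec.const none)
    exact Primrec.list_length.comp
      (Primrec.listFilterMap (Primrec.list_range.comp Primrec.snd) hinner)
  exact hlist.of_eq fun p => (card_filter_eq p.2 (chg p.1 p.2)).symm

theorem ha (n : ℕ) : Computable₂ (a n) := by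
  apply Primrec₂.to_comp
  have hM : Primrec fun p : ℕ × ℕ => M n p.1 p.2 := by
    unfold M
    exact Primrec.nat_min.comp (hm.comp Primrec.fst Primrec.snd) (Primrec.const n)
  have hEv : PrimrecPred fun p : ℕ × ℕ => Even (M n p.1 p.2) := by
    have : PrimrecPred fun p : ℕ × ℕ => M n p.1 p.2 % 2 = 0 :=
      Primrec.eq.comp (Primrec.nat_mod.comp hM (Primrec.const 2)) (Primrec.const 0)
    exact this.of_eq fun p => (Nat.even_iff).symm
  unfold a
  exact Primrec.ite (Primrec.eq.comp Primrec.snd (Primrec.const 0)) (Primrec.const false)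
    (Primrec.to₂ (hEv.decide : _))

/-! ### The diagonalization -/

/-- If the code `cde e` computes the total function `p ↦ cond (f p.1 p.2) 1 0`,
then observed values (where halting) agree with `f`. -/
theorem Vval {f : ℕ → ℕ → Bool} {e : ℕ}
    (hc : eval (cde e) = fun p => Part.some (cond (f p.unpair.1 p.unpair.2) 1 0))
    {s t : ℕ} (h : H e s t) : V e s t = f e t := by
  rw [H, Option.isSome_iff_exists] at h
  obtain ⟨y, hy⟩ := h
  have hmem : y ∈ eval (cde e) (Nat.pair e t) := evaln_sound hy
  rw [hc] at hmem
  simp only [Nat.unpair_pair, Part.mem_some_iff] at hmem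
  subst hmem
  unfold V
  rw [hy]
  cases f e t <;> simp

theorem diag (n : ℕ) : ¬ ∃ f : ℕ → ℕ → Bool, Computable₂ f ∧ ∀ x,
    f x 0 = false ∧ (∃ s, ∀ t, s ≤ t → (f x t = true ↔ x ∈ A n)) ∧
    {s | f x s ≠ f x (s + 1)}.Finite ∧ {s | f x s ≠ f x (s + 1)}.ncard ≤ n := by
  rintro ⟨f, hf, hprop⟩
  -- get a code for the opponent
  have hF : Computable fun p : ℕ => (cond (f p.unpair.1 p.unpair.2) 1 0 : ℕ) := by
    apply Computable.cond
    · exact hf.comp (Computable.fst.comp Computable.unpair) (Computable.snd.comp Computable.unpair)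
    · exact Computable.const 1
    · exact Computable.const 0
  have hP : Nat.Partrec fun p : ℕ => (Part.some (cond (f p.unpair.1 p.unpair.2) 1 0) : Part ℕ) := by
    refine Partrec.nat_iff.mp ?_
    exact hF.partrec
  obtain ⟨c, hc⟩ := exists_code.mp hP
  set e := Encodable.encode c with he
  have hcde : cde e = c := by simp [cde, he]
  have hceval : eval (cde e) = fun p => Part.some (cond (f p.unpair.1 p.unpair.2) 1 0) := by
    rw [hcde, hc]
  obtain ⟨hf0, ⟨sconv, hconv⟩, hCfin, hCcard⟩ := hprop e
  -- every argument halts at some stage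
  have hhalt : ∀ t, ∃ k, H e k t := by
    intro t
    have : (cond (f e t) 1 0 : ℕ) ∈ eval (cde e) (Nat.pair e t) := by
      rw [hceval]; simp
    obtain ⟨k, hk⟩ := evaln_complete.mp this
    exact ⟨k, by rw [H, Option.isSome_iff_exists]; exact ⟨_, hk⟩⟩
  -- a stage beyond which f e is constant
  obtain ⟨T0, hT0⟩ : ∃ T0, ∀ u ∈ {s | f e s ≠ f e (s + 1)}, u < T0 := by
    obtain ⟨T0, hT0⟩ := hCfin.bddAbove
    exact ⟨T0 + 1, fun u hu => Nat.lt_succ_of_le (hT0 hu)⟩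
  set T := max T0 sconv with hT
  have hconst : ∀ t, T ≤ t → f e t = f e T := by
    have key : ∀ d, f e (T + d) = f e T := by
      intro d
      induction d with
      | zero => rfl
      | succ d ih =>
        have h2 : f e (T + d) = f e (T + d + 1) := by
          by_contra hne
          exact absurd (hT0 _ hne) (by omega)
        rw [show T + (d+1) = T + d + 1 by omega, ← h2, ih]
    intro t ht
    obtain ⟨d, rfl⟩ := Nat.exists_eq_add_of_le ht
    exact key d
  set ctot := ((Finset.range T).filter (fun u => f e u ≠ f e (u+1))).card with hctot
  have hparT : f e T = decide (Odd ctot) := by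
    have := bool_parity (f e) hf0 T
    simpa using this
  have hctot_le : ctot ≤ n := by
    have hsub : (((Finset.range T).filter (fun u => f e u ≠ f e (u+1)) : Finset ℕ) : Set ℕ)
        ⊆ {s | f e s ≠ f e (s + 1)} := by
      intro u hu
      simp only [Finset.coe_filter, Set.mem_setOf_eq] at hu
      exact hu.2
    calc ctot = (((Finset.range T).filter (fun u => f e u ≠ f e (u+1)) : Finset ℕ) : Set ℕ).ncard := by
          rw [Set.ncard_coe_finset]
      _ ≤ {s | f e s ≠ f e (s + 1)}.ncard := Set.ncard_le_ncard hsub hCfin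
      _ ≤ n := hCcard
  -- upper bound on m
  have hm_ub : ∀ s, m e s ≤ ctot := by
    intro s
    apply Finset.card_le_card_of_injOn (fun t => t - 1)
    · intro t ht
      simp only [Finset.mem_coe, Finset.mem_filter, Finset.mem_range] at ht ⊢
      obtain ⟨hts, hpre, hne⟩ := ht
      have hVt : V e s t = f e t := Vval hceval (hpre t le_rfl)
      rcases Nat.eq_zero_or_pos t with rfl | hpos
      · exfalso
        apply hne
        rw [hVt, hf0, Vp]; simp
      · have hVp : Vp e s t = f e (t-1) := by
          rw [Vp, if_neg (Nat.pos_iff_ne_zero.mp hpos), Vval hceval (hpre (t-1) (Nat.sub_le _ _))]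
        rw [hVt, hVp] at hne
        have hch : f e (t-1) ≠ f e (t-1+1) := by
          intro h
          apply hne
          rw [h]
          congr 1
          omega
        have := hT0 (t-1) hch
        refine ⟨by omega, hch⟩
    · intro t ht t' ht' h
      simp only [Finset.mem_coe, Finset.mem_filter, Finset.mem_range] at ht ht'
      have hpos : 0 < t := by
        rcases Nat.eq_zero_or_pos t with rfl | h'
        · exfalso
          obtain ⟨_, hpre, hne⟩ := ht
          apply hne
          rw [Vval hceval (hpre 0 le_rfl), hf0, Vp]; simp
        · exact h'
      have hpos' : 0 < t' := by
        rcases Nat.eq_zero_or_pos t' with rfl | h'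
        · exfalso
          obtain ⟨_, hpre, hne⟩ := ht'
          apply hne
          rw [Vval hceval (hpre 0 le_rfl), hf0, Vp]; simp
        · exact h'
      have h' : t - 1 = t' - 1 := h
      omega
  -- a stage where all of [0,T] has halted
  obtain ⟨sstar, hsstar⟩ : ∃ s, ∀ t ≤ T, H e s t := by
    clear hconst hparT
    induction T with
    | zero =>
      obtain ⟨k, hk⟩ := hhalt 0
      exact ⟨k, fun t ht => by rw [Nat.le_zero.mp ht]; exact hk⟩
    | succ T ih =>
      obtain ⟨s1, hs1⟩ := ih
      obtain ⟨k, hk⟩ := hhalt (T+1)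
      refine ⟨max s1 k, fun t ht => ?_⟩
      rcases Nat.lt_or_ge t (T+1) with h | h
      · exact H_mono (le_max_left _ _) (hs1 t (by omega))
      · have : t = T + 1 := by omega
        rw [this]
        exact H_mono (le_max_right _ _) hk
  -- lower bound at a large stage
  have hm_lb : ctot ≤ m e (max sstar (T+1)) := by
    apply Finset.card_le_card_of_injOn (fun u => u + 1)
    · intro u hu
      simp only [Finset.mem_coe, Finset.mem_filter, Finset.mem_range] at hu ⊢
      obtain ⟨huT, hne⟩ := hu
      have hhs : ∀ t' ≤ u + 1, H e (max sstar (T+1)) t' :=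
        fun t' ht' => H_mono (le_max_left _ _) (hsstar t' (by omega))
      refine ⟨by omega, hhs, ?_⟩
      rw [Vval hceval (hhs _ le_rfl), Vp, if_neg (Nat.succ_ne_zero u),
        Nat.add_sub_cancel, Vval hceval (hhs u (by omega))]
      simpa using fun h => hne h.symm
    · intro u _ u' _ h
      have h' : u + 1 = u' + 1 := h
      omega
  have hm_eq : ∀ s, max sstar (T+1) ≤ s → m e s = ctot :=
    fun s hs => le_antisymm (hm_ub s) (le_trans hm_lb (m_mono e hs))
  -- membership in A n is decided by the parity of ctot
  have hAiff : e ∈ A n ↔ Even ctot := by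
    obtain ⟨s1, hs1pos, hs1c, hs1A⟩ := conv n e
    set s2 := max s1 (max sstar (T+1)) with hs2
    have h1 : a n e s2 = a n e s1 := hs1c s2 (le_max_left _ _)
    have h2 : a n e s2 = decide (Even ctot) := by
      have hms : m e s2 = ctot := hm_eq s2 (le_max_right _ _)
      have : M n e s2 = ctot := by rw [M, hms]; exact min_eq_left hctot_le
      rw [a, if_neg (show s2 ≠ 0 by positivity), this]
    rw [← hs1A, ← h1, h2]
    simp
  -- final contradiction
  have hfT : f e T = true ↔ e ∈ A n := hconv T (le_max_right _ _)
  rw [hparT, hAiff] at hfT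
  simp only [decide_eq_true_eq] at hfT
  rcases Nat.even_or_odd ctot with h | h
  · exact (Nat.not_odd_iff_even.mpr h) (hfT.mpr h)
  · exact (Nat.not_even_iff_odd.mpr h) (hfT.mp h)

end DH

/-- The difference hierarchy is proper: for every `n ≥ 1` there is a `Δ⁰₂` set
that is `(n+1)`-c.e. but not `n`-c.e. -/
theorem difference_hierarchy_proper :
    ∀ n : ℕ, 1 ≤ n → ∃ A : Set ℕ,
      (∃ g : ℕ → ℕ → Bool, Computable₂ g ∧
        ∀ x, ∃ s, ∀ t, s ≤ t → (g x t = true ↔ x ∈ A)) ∧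
      NCE (n + 1) A ∧ ¬ NCE n A := by
  intro n _
  refine ⟨DH.A n, ?_, ?_, ?_⟩
  · refine ⟨DH.a n, DH.ha n, fun x => ?_⟩
    obtain ⟨s, _, hsc, hsA⟩ := DH.conv n x
    exact ⟨s, fun t ht => by rw [hsc t ht, hsA]⟩
  · refine ⟨DH.a n, DH.ha n, fun x => ?_⟩
    obtain ⟨s, _, hsc, hsA⟩ := DH.conv n x
    exact ⟨rfl, ⟨s, fun t ht => by rw [hsc t ht, hsA]⟩, (DH.a_changes n x).1, (DH.a_changes n x).2⟩
  · exact DH.diag n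
end

section
/- The limsup over n of NID(x,y) taken over pairs of strings x, y with |x| = |y| = n equals 1; in particular, for x a random string of length n and y = 0ⁿ, NID(x,y) → 1 as n → ∞. -/
/-- A universal prefix machine: a partial computable binary function
(program, condition) ↦ output, whose domain is prefix-free in the program
argument, which outputs every string from some program, and which is
optimal (universal) among all partial computable prefix machines. -/
structure PrefixUMachine where
  eval : List Bool → List Bool → Part (List Bool)
  partrec : Partrec fun p : List Bool × List Bool => eval p.1 p.2
  prefixFree : ∀ y p q, (eval p y).Dom → (eval q y).Dom → p <+: q → p = q
  total : ∀ x y : List Bool, ∃ p, x ∈ eval p y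
  universal : ∀ M : List Bool → List Bool → Part (List Bool),
      Partrec (fun p : List Bool × List Bool => M p.1 p.2) →
      (∀ y p q, (M p y).Dom → (M q y).Dom → p <+: q → p = q) →
      ∃ c, ∀ x y p, x ∈ M p y → ∃ q, x ∈ eval q y ∧ q.length ≤ p.length + c

namespace PrefixUMachine

/-- Conditional prefix-free Kolmogorov complexity `K(x|y)`. -/
noncomputable def KC (U : PrefixUMachine) (x y : List Bool) : ℕ :=
  sInf {n | ∃ p, p.length = n ∧ x ∈ U.eval p y}

/-- (Unconditional) prefix-free Kolmogorov complexity `K(x)` (empty condition). -/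
noncomputable def K (U : PrefixUMachine) (x : List Bool) : ℕ := U.KC x []

/-- The normalized information distance
`NID(x,y) = max{K(x|y),K(y|x)} / max{K(x),K(y)}`. -/
noncomputable def NID (U : PrefixUMachine) (x y : List Bool) : ℚ :=
  (max (U.KC x y) (U.KC y x) : ℚ) / (max (U.K x) (U.K y) : ℚ)

theorem exists_min (U : PrefixUMachine) (x y : List Bool) :
    ∃ p, x ∈ U.eval p y ∧ p.length = U.KC x y := by
  obtain ⟨p, hp⟩ := U.total x y
  have h : U.KC x y ∈ {n | ∃ p, p.length = n ∧ x ∈ U.eval p y} :=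
    Nat.sInf_mem ⟨p.length, p, rfl, hp⟩
  obtain ⟨q, hq1, hq2⟩ := h
  exact ⟨q, hq2, hq1⟩

/-- A canonical shortest program `x*` for `x`. -/
noncomputable def star (U : PrefixUMachine) (x : List Bool) : List Bool :=
  (exists_min U x []).choose

/-- A computable injective pairing of binary strings. -/
def pairStr (x y : List Bool) : List Bool := (x.flatMap fun b => [true, b]) ++ false :: y

/-- A set of strings is computably enumerable. -/
def CEStr (A : Set (List Bool)) : Prop :=
  ∃ f : List Bool →. Unit, Partrec f ∧ ∀ x, x ∈ A ↔ (f x).Dom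

/-- A set of pairs of strings is computably enumerable. -/
def CEPair (A : Set (List Bool × List Bool)) : Prop :=
  ∃ f : List Bool × List Bool →. Unit, Partrec f ∧ ∀ x, x ∈ A ↔ (f x).Dom

end PrefixUMachine

open PrefixUMachine


namespace KProof

/-- Parsing state: phase (0 = expect flag, 1 = expect header bit, 2 = payload),
reversed header bits, reversed payload. -/
abbrev St := ℕ × List Bool × List Bool

def step (s : St) (b : Bool) : St :=
  if s.1 = 0 then (if b then (1, s.2.1, s.2.2) else (2, s.2.1, s.2.2))
  else if s.1 = 1 then (0, b :: s.2.1, s.2.2)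
  else (2, s.2.1, b :: s.2.2)

def run (p : List Bool) : St := p.foldl step (0, [], [])

/-- value of a reversed (most-significant-first) bit list -/
def val (h : List Bool) : ℕ := h.foldl (fun a b => 2 * a + cond b 1 0) 0

def natBits : ℕ → List Bool
  | 0 => []
  | (n+1) => decide ((n+1) % 2 = 1) :: natBits ((n+1)/2)
decreasing_by exact Nat.div_lt_self (Nat.succ_pos n) one_lt_two

def hdr (n : ℕ) : List Bool := ((natBits n).flatMap fun b => [true, b]) ++ [false]

def decodeB (p : List Bool) : Option (List Bool) :=
  let s := run p
  if s.1 = 2 ∧ s.2.2.length = val s.2.1 then some s.2.2.reverse else none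

def decodeC (p : List Bool) : Option (ℕ × List Bool) :=
  let s := run p
  if s.1 = 2 then some (val s.2.1, s.2.2.reverse) else none

theorem primrec_step : Primrec₂ step := by
  unfold step
  have h1 : Primrec (fun s : St × Bool => s.1.1) := Primrec.fst.comp Primrec.fst
  have h21 : Primrec (fun s : St × Bool => s.1.2.1) :=
    Primrec.fst.comp (Primrec.snd.comp Primrec.fst)
  have h22 : Primrec (fun s : St × Bool => s.1.2.2) :=
    Primrec.snd.comp (Primrec.snd.comp Primrec.fst)
  have hb : Primrec (fun s : St × Bool => s.2) := Primrec.snd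
  exact Primrec₂.mk <| Primrec.ite (Primrec.eq.comp h1 (Primrec.const 0))
    (Primrec.ite (Primrec.eq.comp hb (Primrec.const true))
      ((Primrec.const 1).pair (h21.pair h22))
      ((Primrec.const 2).pair (h21.pair h22)))
    (Primrec.ite (Primrec.eq.comp h1 (Primrec.const 1))
      ((Primrec.const 0).pair ((Primrec.list_cons.comp hb h21).pair h22))
      ((Primrec.const 2).pair (h21.pair (Primrec.list_cons.comp hb h22))))

theorem primrec_run : Primrec run :=
  (Primrec.list_foldl Primrec.id (Primrec.const ((0 : ℕ), ([] : List Bool), ([] : List Bool)))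
    (primrec_step.comp (Primrec.fst.comp Primrec.snd) (Primrec.snd.comp Primrec.snd)).to₂)

theorem primrec_val : Primrec val :=
  (Primrec.list_foldl Primrec.id (Primrec.const 0)
    ((Primrec.nat_add.comp
        (Primrec.nat_mul.comp (Primrec.const 2) (Primrec.fst.comp Primrec.snd))
        (Primrec.cond (Primrec.snd.comp Primrec.snd) (Primrec.const 1) (Primrec.const 0))).to₂))

theorem primrec_decodeB : Primrec decodeB := by
  unfold decodeB
  have hr : Primrec run := primrec_run
  exact Primrec.ite
    (PrimrecPred.and
      (Primrec.eq.comp (Primrec.fst.comp hr) (Primrec.const 2))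
      (Primrec.eq.comp (Primrec.list_length.comp (Primrec.snd.comp (Primrec.snd.comp hr)))
        (primrec_val.comp (Primrec.fst.comp (Primrec.snd.comp hr)))))
    (Primrec.option_some.comp (Primrec.list_reverse.comp (Primrec.snd.comp (Primrec.snd.comp hr))))
    (Primrec.const none)

theorem primrec_decodeC : Primrec decodeC := by
  unfold decodeC
  have hr : Primrec run := primrec_run
  exact Primrec.ite (Primrec.eq.comp (Primrec.fst.comp hr) (Primrec.const 2))
    (Primrec.option_some.comp
      ((primrec_val.comp (Primrec.fst.comp (Primrec.snd.comp hr))).pair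
        (Primrec.list_reverse.comp (Primrec.snd.comp (Primrec.snd.comp hr)))))
    (Primrec.const none)

end KProof

namespace KProof2
open KProof

theorem foldl_step_phase2 : ∀ (l : List Bool) (h pay : List Bool),
    l.foldl step (2, h, pay) = (2, h, l.reverse ++ pay) := by
  intro l
  induction l with
  | nil => simp
  | cons b t ih =>
    intro h pay
    simp only [List.foldl_cons, List.reverse_cons, List.append_assoc]
    have : step (2, h, pay) b = (2, h, b :: pay) := by simp [step]
    rw [this, ih]
    simp

theorem foldl_step_hdr : ∀ (bs : List Bool) (h pay l : List Bool),
    ((bs.flatMap fun b => [true, b]) ++ false :: l).foldl step (0, h, pay)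
      = l.foldl step (2, bs.reverse ++ h, pay) := by
  intro bs
  induction bs with
  | nil =>
    intro h pay l
    simp [step]
  | cons b t ih =>
    intro h pay l
    simp only [List.flatMap_cons, List.cons_append, List.append_assoc, List.foldl_cons]
    have h1 : step (0, h, pay) true = (1, h, pay) := by simp [step]
    have h2 : step (1, h, pay) b = (0, b :: h, pay) := by simp [step]
    rw [h1, h2]
    simp only [List.nil_append]
    rw [ih]
    simp

theorem run_hdr (n : ℕ) (l : List Bool) :
    run (hdr n ++ l) = (2, (natBits n).reverse, l.reverse) := by
  unfold run hdr
  rw [List.append_assoc]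
  show ((natBits n).flatMap (fun b => [true, b]) ++ false :: l).foldl step (0, [], [])
    = _
  rw [foldl_step_hdr, foldl_step_phase2]
  simp

theorem val_natBits (n : ℕ) : val ((natBits n).reverse) = n := by
  unfold val
  rw [List.foldl_reverse]
  induction n using Nat.strong_induction_on with
  | _ n ih =>
    match n with
    | 0 => simp [natBits]
    | (m+1) =>
      rw [natBits]
      simp only [List.foldr_cons]
      rw [ih ((m+1)/2) (Nat.div_lt_self (Nat.succ_pos m) one_lt_two)]
      rcases Nat.even_or_odd (m+1) with he | ho
      · have : (m+1) % 2 = 0 := Nat.even_iff.mp he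
        simp [this]
        omega
      · have : (m+1) % 2 = 1 := Nat.odd_iff.mp ho
        simp [this]
        omega

theorem decodeC_hdr (n : ℕ) (q : List Bool) : decodeC (hdr n ++ q) = some (n, q) := by
  unfold decodeC
  rw [run_hdr]
  simp [val_natBits]

theorem decodeB_enc (x : List Bool) : decodeB (hdr x.length ++ x) = some x := by
  unfold decodeB
  rw [run_hdr]
  simp [val_natBits]

theorem run_append (p t : List Bool) : run (p ++ t) = t.foldl step (run p) := by
  unfold run; rw [List.foldl_append]

theorem decodeB_append {p : List Bool} {x : List Bool} (t : List Bool)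
    (h : decodeB p = some x) (h2 : (decodeB (p ++ t)).isSome) : t = [] := by
  unfold decodeB at h h2
  by_cases hc : (run p).1 = 2 ∧ (run p).2.2.length = val (run p).2.1
  · have hrun : run (p ++ t) = (2, (run p).2.1, t.reverse ++ (run p).2.2) := by
      rw [run_append]
      have : run p = (2, (run p).2.1, (run p).2.2) := by
        rcases hc with ⟨h1, _⟩
        exact Prod.ext h1 rfl
      rw [this, foldl_step_phase2]
    rw [hrun] at h2
    simp at h2
    rcases hc with ⟨_, hl2⟩
    have : t.length = 0 := by omega
    simpa using this
  · simp [if_neg hc] at h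

theorem decodeC_append {p : List Bool} {n : ℕ} {r : List Bool} (t : List Bool)
    (h : decodeC p = some (n, r)) : decodeC (p ++ t) = some (n, r ++ t) := by
  unfold decodeC at h ⊢
  by_cases hc : (run p).1 = 2
  · have hrun : run (p ++ t) = (2, (run p).2.1, t.reverse ++ (run p).2.2) := by
      rw [run_append]
      have : run p = (2, (run p).2.1, (run p).2.2) := Prod.ext hc rfl
      rw [this, foldl_step_phase2]
    rw [hrun]
    simp only [if_pos hc] at h
    have hn : val (run p).2.1 = n := by
      have := congrArg (fun o => o.map Prod.fst) h; simpa using this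
    have hrr : (run p).2.2.reverse = r := by
      have := congrArg (fun o => o.map Prod.snd) h; simpa using this
    simp [hn, ← hrr]
  · simp [if_neg hc] at h

theorem flatMap_pair_length (l : List Bool) :
    (l.flatMap fun b => [true, b]).length = 2 * l.length := by
  induction l with
  | nil => simp
  | cons b t ih => simp [ih]; omega

theorem hdr_length (n : ℕ) : (hdr n).length = 2 * (natBits n).length + 1 := by
  unfold hdr
  rw [List.length_append, flatMap_pair_length]
  simp

theorem two_pow_natBits_length (n : ℕ) (hn : 1 ≤ n) : 2 ^ (natBits n).length ≤ 2 * n := by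
  induction n using Nat.strong_induction_on with
  | _ n ih =>
    match n with
    | (m+1) =>
      rw [natBits]
      simp only [List.length_cons, pow_succ]
      by_cases h0 : (m+1)/2 = 0
      · have : m = 0 := by omega
        subst this
        simp [h0, natBits]
      · have := ih ((m+1)/2) (Nat.div_lt_self (Nat.succ_pos m) one_lt_two) (by omega)
        calc 2 ^ (natBits ((m+1)/2)).length * 2 ≤ (2 * ((m+1)/2)) * 2 :=
              Nat.mul_le_mul_right _ this
          _ ≤ 2 * (m+1) := by omega

theorem natBits_length_le_sqrt (n : ℕ) (hn : 1 ≤ n) :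
    (natBits n).length ≤ 2 * Nat.sqrt n := by
  set k := (natBits n).length with hk
  have hpow : 2 ^ k ≤ 2 * n := two_pow_natBits_length n hn
  have hk1 : 1 ≤ k := by
    match n, hn with
    | (m+1), _ => rw [hk, natBits]; simp
  have hpow' : 2 ^ (k - 1) ≤ n := by
    have : 2 * 2 ^ (k-1) = 2 ^ k := by
      rw [← pow_succ']
      congr 1
      omega
    omega
  have h2m : 2 ^ (2 * ((k-1)/2)) ≤ n :=
    le_trans (Nat.pow_le_pow_right (by norm_num) (by omega)) hpow'
  have hsq : 2 ^ ((k-1)/2) ≤ Nat.sqrt n := by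
    rw [Nat.le_sqrt]
    calc 2 ^ ((k-1)/2) * 2 ^ ((k-1)/2) = 2 ^ (2 * ((k-1)/2)) := by
          rw [← pow_add]; congr 1; omega
      _ ≤ n := h2m
  have hlt : (k-1)/2 < 2 ^ ((k-1)/2) := Nat.lt_two_pow_self
  have : (k-1)/2 < Nat.sqrt n := lt_of_lt_of_le hlt hsq
  omega

end KProof2

namespace KProof3
open KProof KProof2 PrefixUMachine

variable (U : PrefixUMachine)

theorem exists_c1 : ∃ c1, ∀ x y, U.KC x y ≤ U.K x + c1 := by
  obtain ⟨c, hc⟩ := U.universal (fun p _ => U.eval p [])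
    (U.partrec.comp (Computable.fst.pair (Computable.const ([] : List Bool))))
    (fun y p q hp hq => U.prefixFree [] p q hp hq)
  refine ⟨c, fun x y => ?_⟩
  obtain ⟨p, hp, hlen⟩ := U.exists_min x []
  obtain ⟨q, hq, hql⟩ := hc x y p hp
  calc U.KC x y ≤ q.length := Nat.sInf_le ⟨q, rfl, hq⟩
    _ ≤ p.length + c := hql
    _ = U.K x + c := by rw [hlen]; rfl

theorem exists_c2 : ∃ c2, ∀ (x y : List Bool),
    U.KC x y ≤ x.length + 2 * (natBits x.length).length + 1 + c2 := by
  obtain ⟨c, hc⟩ := U.universal (fun p _ => (decodeB p : Part (List Bool)))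
    (Computable.ofOption (primrec_decodeB.to_comp.comp Computable.fst))
    (by
      intro y p q hp hq hpre
      rw [Part.ofOption_dom] at hp hq
      obtain ⟨x, hx⟩ := Option.isSome_iff_exists.mp hp
      obtain ⟨t, rfl⟩ := hpre
      have := decodeB_append t hx hq
      rw [this, List.append_nil])
  refine ⟨c, fun x y => ?_⟩
  have hx : x ∈ (decodeB (hdr x.length ++ x) : Part (List Bool)) := by
    rw [decodeB_enc]; exact Part.mem_some x
  obtain ⟨q, hq, hql⟩ := hc x y _ hx
  calc U.KC x y ≤ q.length := Nat.sInf_le ⟨q, rfl, hq⟩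
    _ ≤ (hdr x.length ++ x).length + c := hql
    _ = x.length + 2 * (natBits x.length).length + 1 + c := by
        rw [List.length_append, hdr_length]; omega

theorem computable_replicate_false : Computable (fun n => List.replicate n false) := by
  have : Primrec (fun n => (List.range n).map fun _ => false) :=
    Primrec.list_map Primrec.list_range (Primrec.const false).to₂
  exact (this.of_eq fun n => by
    rw [List.map_const', List.length_range]).to_comp

theorem exists_c3 : ∃ c3, ∀ (x : List Bool) (n : ℕ),
    U.K x ≤ U.KC x (List.replicate n false) + 2 * (natBits n).length + 1 + c3 := by
  obtain ⟨c, hc⟩ := U.universal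
    (fun p _ => (decodeC p : Part (ℕ × List Bool)).bind fun z =>
      U.eval z.2 (List.replicate z.1 false))
    ((Computable.ofOption (primrec_decodeC.to_comp.comp Computable.fst)).bind
      (U.partrec.comp ((Computable.snd.comp Computable.snd).pair
        (computable_replicate_false.comp (Computable.fst.comp Computable.snd)))).to₂)
    (by
      intro y p q hp hq hpre
      obtain ⟨v, hv⟩ := Part.dom_iff_mem.mp hp
      rw [Part.mem_bind_iff] at hv
      obtain ⟨⟨n, r⟩, hz, hv⟩ := hv
      obtain ⟨w, hw⟩ := Part.dom_iff_mem.mp hq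
      rw [Part.mem_bind_iff] at hw
      obtain ⟨⟨n', r'⟩, hz2, hw⟩ := hw
      rw [Part.mem_ofOption, Option.mem_def] at hz hz2
      obtain ⟨t, rfl⟩ := hpre
      rw [decodeC_append t hz] at hz2
      obtain ⟨hn, hr⟩ : n' = n ∧ r' = r ++ t := by
        have := Option.some_injective _ hz2
        exact ⟨(congrArg Prod.fst this).symm, (congrArg Prod.snd this).symm⟩
      replace hn := hn.symm
      subst hn
      subst hr
      have hreq : r = r ++ t := U.prefixFree (List.replicate n false) r (r ++ t)
        (Part.dom_iff_mem.mpr ⟨v, hv⟩) (Part.dom_iff_mem.mpr ⟨w, hw⟩) ⟨t, rfl⟩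
      have ht : t = [] := by
        have := congrArg List.length hreq
        simp at this
        simpa using this
      rw [ht, List.append_nil])
  refine ⟨c, fun x n => ?_⟩
  obtain ⟨p, hp, hlen⟩ := U.exists_min x (List.replicate n false)
  have hx : x ∈ ((decodeC (hdr n ++ p) : Part (ℕ × List Bool)).bind fun z =>
      U.eval z.2 (List.replicate z.1 false)) := by
    rw [Part.mem_bind_iff]
    exact ⟨(n, p), by rw [Part.mem_ofOption, Option.mem_def, decodeC_hdr], hp⟩
  obtain ⟨q, hq, hql⟩ := hc x [] _ hx
  calc U.K x ≤ q.length := Nat.sInf_le ⟨q, rfl, hq⟩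
    _ ≤ (hdr n ++ p).length + c := hql
    _ = U.KC x (List.replicate n false) + 2 * (natBits n).length + 1 + c := by
        rw [List.length_append, hdr_length, hlen]; omega


theorem replicate_sep : ∀ (k : ℕ) (j : ℕ) (a b : List Bool),
    List.replicate k true ++ false :: a = List.replicate j true ++ false :: b →
    k = j ∧ a = b := by
  intro k
  induction k with
  | zero =>
    intro j a b h
    cases j with
    | zero => simpa using h
    | succ j => simp [List.replicate_succ] at h
  | succ k ih =>
    intro j a b h
    cases j with
    | zero => simp [List.replicate_succ] at h
    | succ j =>
      simp only [List.replicate_succ, List.cons_append, List.cons.injEq] at h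
      obtain ⟨hkj, hab⟩ := ih j a b h.2
      exact ⟨by omega, hab⟩

theorem pad_inj {p q : List Bool} {j k : ℕ}
    (h : p ++ false :: List.replicate j true = q ++ false :: List.replicate k true) :
    p = q := by
  have hrev := congrArg List.reverse h
  simp only [List.reverse_append, List.reverse_cons] at hrev
  rw [List.reverse_replicate, List.reverse_replicate] at hrev
  have h2 : List.replicate j true ++ false :: p.reverse
      = List.replicate k true ++ false :: q.reverse := by
    simpa [List.append_assoc] using hrev
  obtain ⟨-, h3⟩ := replicate_sep j k _ _ h2
  simpa using congrArg List.reverse h3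

theorem exists_hard (n : ℕ) (y : List Bool) :
    ∃ x : List Bool, x.length = n ∧ n ≤ U.KC x y := by
  by_contra hcon
  push_neg at hcon
  have hV : ∀ v : List.Vector Bool n, ∃ p, v.1 ∈ U.eval p y ∧ p.length < n := by
    intro v
    obtain ⟨p, hp, hl⟩ := U.exists_min v.1 y
    exact ⟨p, hp, hl ▸ hcon v.1 v.2⟩
  choose prog hmem hlen using hV
  let f : Option (List.Vector Bool n) → List.Vector Bool n := fun o =>
    match o with
    | none => ⟨List.replicate n true, by simp⟩
    | some v => ⟨prog v ++ false :: List.replicate (n - 1 - (prog v).length) true, by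
        have := hlen v
        simp only [List.length_append, List.length_cons, List.length_replicate]
        omega⟩
  have hfval : ∀ o, (f o).1 = match o with
      | none => List.replicate n true
      | some v => prog v ++ false :: List.replicate (n - 1 - (prog v).length) true := by
    intro o; cases o <;> rfl
  have hinj : Function.Injective f := by
    intro a b hab
    have hval : (f a).1 = (f b).1 := congrArg Subtype.val hab
    rw [hfval a, hfval b] at hval
    match a, b with
    | none, none => rfl
    | none, some w =>
      exfalso
      have hval' : List.replicate n true
          = prog w ++ false :: List.replicate (n - 1 - (prog w).length) true := hval
      have : false ∈ List.replicate n true := by rw [hval']; simp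
      simpa using List.eq_of_mem_replicate this
    | some v, none =>
      exfalso
      have hval' : prog v ++ false :: List.replicate (n - 1 - (prog v).length) true
          = List.replicate n true := hval
      have : false ∈ List.replicate n true := by rw [← hval']; simp
      simpa using List.eq_of_mem_replicate this
    | some v, some w =>
      have hval' : prog v ++ false :: List.replicate (n - 1 - (prog v).length) true
          = prog w ++ false :: List.replicate (n - 1 - (prog w).length) true := hval
      have hpq : prog v = prog w := pad_inj hval'
      have : v.1 = w.1 := Part.mem_unique (hmem v) (hpq ▸ hmem w)
      exact congrArg some (Subtype.ext this)
  have hcard := Fintype.card_le_of_injective _ hinj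
  simp only [Fintype.card_option, card_vector, Fintype.card_bool] at hcard
  omega

theorem K_growth (m : ℕ) : ∃ N, ∀ n, N ≤ n → ∀ x : List Bool, x.length = n → m < U.K x := by
  classical
  set S : Set (List Bool) := {x | U.K x ≤ m} with hS
  have hSsub : ∀ x ∈ S, ∃ p : List Bool, x ∈ U.eval p [] ∧ p.length ≤ m := by
    intro x hx
    obtain ⟨p, hp, hl⟩ := U.exists_min x []
    exact ⟨p, hp, by rw [hl]; exact hx⟩
  have hfin : S.Finite := by
    have hfinT : Finite {p : List Bool // p.length ≤ m} :=
      (List.finite_length_le Bool m).to_subtype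
    choose g hg1 hg2 using hSsub
    have : Finite S := by
      refine Finite.of_injective (fun x : S => (⟨g x.1 x.2, hg2 x.1 x.2⟩ :
        {p : List Bool // p.length ≤ m})) ?_
      intro a b hab
      have : g a.1 a.2 = g b.1 b.2 := congrArg Subtype.val hab
      exact Subtype.ext (Part.mem_unique (hg1 a.1 a.2) (this ▸ hg1 b.1 b.2))
    exact S.toFinite
  obtain ⟨N, hN⟩ := (hfin.image List.length).bddAbove
  refine ⟨N + 1, fun n hn x hxl => ?_⟩
  by_contra hK
  push_neg at hK
  have hxS : x ∈ S := hK
  have := hN (Set.mem_image_of_mem List.length hxS)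
  omega


theorem sub_lemma (a b : ℕ) (ε : ℚ) (hε : 0 < ε) :
    ∃ N : ℕ, 1 ≤ N ∧ ∀ n : ℕ, N ≤ n → (a : ℚ) + b * (Nat.sqrt n : ℚ) < ε * n := by
  set m : ℕ := ⌈(2 * b : ℚ) / ε⌉₊ + 1 with hm
  set N₂ : ℕ := ⌈(2 * a : ℚ) / ε⌉₊ + 1 with hN2
  refine ⟨max (m * m) N₂, le_trans (by omega : 1 ≤ N₂) (le_max_right _ _), fun n hn => ?_⟩
  have hmm : m * m ≤ n := le_trans (le_max_left _ _) hn
  have hsqrt : m ≤ Nat.sqrt n := Nat.le_sqrt.mpr hmm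
  have hs2 : Nat.sqrt n * Nat.sqrt n ≤ n := Nat.sqrt_le n
  have hbq : 2 * (b : ℚ) ≤ ε * m := by
    have h1 : (2 * b : ℚ) / ε ≤ (⌈(2 * b : ℚ) / ε⌉₊ : ℚ) := Nat.le_ceil _
    have h2 : ((⌈(2 * b : ℚ) / ε⌉₊ : ℚ)) ≤ m := by
      rw [hm]; push_cast; linarith
    have := le_trans h1 h2
    rw [div_le_iff₀ hε] at this
    linarith [this]
  have hmsq : (m : ℚ) * (Nat.sqrt n : ℚ) ≤ (n : ℚ) := by
    have h1 : (m : ℚ) * (Nat.sqrt n : ℚ) ≤ (Nat.sqrt n : ℚ) * (Nat.sqrt n : ℚ) := by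
      have : (m : ℚ) ≤ (Nat.sqrt n : ℚ) := by exact_mod_cast hsqrt
      nlinarith [Nat.cast_nonneg (α := ℚ) (Nat.sqrt n)]
    have h2 : ((Nat.sqrt n : ℕ) : ℚ) * (Nat.sqrt n : ℚ) ≤ (n : ℚ) := by exact_mod_cast hs2
    linarith
  have hbpart : 2 * ((b : ℚ) * (Nat.sqrt n : ℚ)) ≤ ε * n := by
    have h0 : (0 : ℚ) ≤ (Nat.sqrt n : ℚ) := Nat.cast_nonneg _
    nlinarith
  have hapart : 2 * (a : ℚ) < ε * n := by
    have h1 : (2 * a : ℚ) / ε ≤ (⌈(2 * a : ℚ) / ε⌉₊ : ℚ) := Nat.le_ceil _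
    have h2 : (N₂ : ℚ) ≤ n := by
      exact_mod_cast le_trans (le_max_right (m*m) N₂) hn
    have h3 : ((⌈(2 * a : ℚ) / ε⌉₊ : ℚ)) < (n : ℚ) := by
      rw [hN2] at h2; push_cast at h2; linarith
    have := lt_of_le_of_lt h1 h3
    rw [div_lt_iff₀ hε] at this
    linarith [this]
  linarith

/-- header cost bound -/
theorem hdr_cost (n : ℕ) (hn : 1 ≤ n) :
    2 * (natBits n).length + 1 ≤ 4 * Nat.sqrt n + 1 := by
  have := natBits_length_le_sqrt n hn
  omega


theorem q_lower {e num D nq s t : ℚ} (he0 : 0 < e) (he1 : e ≤ 1)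
    (hD : 0 < D) (hDB : D ≤ nq + t) (ht : 0 ≤ t)
    (hnum : nq - s ≤ num) (hcond : s + t < e * nq) :
    1 - e < num / D := by
  rw [lt_div_iff₀ hD]
  have h1 : (1 - e) * D ≤ (1 - e) * (nq + t) := mul_le_mul_of_nonneg_left hDB (by linarith)
  have h2 : e * nq ≤ e * (nq + t) := by nlinarith
  nlinarith

theorem q_upper {e num D c : ℚ} (hD : 0 < D) (hnum : num ≤ D + c) (hc : c < e * D) :
    num / D < 1 + e := by
  rw [div_lt_iff₀ hD]
  nlinarith

end KProof3

open KProof KProof2 KProof3 in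
/-- The limsup of `NID(x,y)` over pairs with `|x| = |y| = n` equals 1;
in particular, for random `x` of length `n` and `y = 0ⁿ`,
`NID(x,y) → 1` as `n → ∞`. -/
theorem nid_limsup_one (U : PrefixUMachine) :
    (∀ ε : ℚ, 0 < ε →
      {n : ℕ | ∃ x y : List Bool, x.length = n ∧ y.length = n ∧
        1 - ε < U.NID x y}.Infinite ∧
      ∃ N, ∀ n, N ≤ n → ∀ x y : List Bool, x.length = n → y.length = n →
        U.NID x y < 1 + ε) ∧
    ∀ x : ℕ → List Bool, (∀ n, (x n).length = n ∧ n ≤ U.K (x n)) →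
      ∀ ε : ℚ, 0 < ε → ∃ N, ∀ n, N ≤ n →
        |U.NID (x n) (List.replicate n false) - 1| < ε := by
  classical
  obtain ⟨c1, hc1⟩ := exists_c1 U
  obtain ⟨c2, hc2⟩ := exists_c2 U
  obtain ⟨c3, hc3⟩ := exists_c3 U
  have hKup : ∀ z : List Bool,
      U.K z ≤ z.length + (2 * (natBits z.length).length + 1) + c2 := by
    intro z
    have := hc2 z []
    unfold PrefixUMachine.K
    omega
  constructor
  · intro ε hε
    set ε' := min ε 1 with hε'def
    have hε'0 : 0 < ε' := lt_min hε one_pos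
    have hε'le : ε' ≤ ε := min_le_left _ _
    have hε'1 : ε' ≤ 1 := min_le_right _ _
    constructor
    · -- limsup lower bound : infinitely many n
      obtain ⟨Ns, hNs1, hNs⟩ := sub_lemma (1 + c2) 4 ε' hε'0
      have hsub : Set.Ici (max Ns (c1 + 1)) ⊆ {n : ℕ | ∃ x y : List Bool,
          x.length = n ∧ y.length = n ∧ 1 - ε < U.NID x y} := by
        intro n hn
        rw [Set.mem_Ici] at hn
        have hnNs : Ns ≤ n := le_trans (le_max_left _ _) hn
        have hnc1 : c1 + 1 ≤ n := le_trans (le_max_right _ _) hn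
        have hn1 : 1 ≤ n := le_trans hNs1 hnNs
        obtain ⟨x, hxl, hxK⟩ := exists_hard U n (List.replicate n false)
        set y := List.replicate n false with hydef
        have hyl : y.length = n := List.length_replicate
        refine ⟨x, y, hxl, hyl, ?_⟩
        -- denominators and numerators
        set H : ℕ := 2 * (natBits n).length + 1 with hHdef
        have hHsqrt : (H : ℚ) ≤ 4 * (Nat.sqrt n : ℚ) + 1 := by
          have := hdr_cost n hn1
          rw [hHdef]; push_cast; exact_mod_cast this
        have hHcast : (H : ℚ) = 2 * ((natBits n).length : ℚ) + 1 := by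
          rw [hHdef]; push_cast; ring
        have hKx : U.K x ≤ n + H + c2 := by have := hKup x; rw [hxl] at this; omega
        have hKy : U.K y ≤ n + H + c2 := by have := hKup y; rw [hyl] at this; omega
        have hKxpos : 1 ≤ U.K x := by
          have := hc1 x y
          omega
        unfold PrefixUMachine.NID
        have hD : (0 : ℚ) < max (U.K x : ℚ) (U.K y : ℚ) := by
          have : (1 : ℚ) ≤ (U.K x : ℚ) := by exact_mod_cast hKxpos
          have := le_max_left (U.K x : ℚ) (U.K y : ℚ)
          linarith
        have hDB : max (U.K x : ℚ) (U.K y : ℚ) ≤ (n : ℚ) + ((H : ℚ) + c2) := by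
          apply max_le
          · have : (U.K x : ℚ) ≤ ((n + H + c2 : ℕ) : ℚ) := by exact_mod_cast hKx
            push_cast at this; linarith [hHcast]
          · have : (U.K y : ℚ) ≤ ((n + H + c2 : ℕ) : ℚ) := by exact_mod_cast hKy
            push_cast at this; linarith [hHcast]
        have hnum : (n : ℚ) - 0 ≤ max (U.KC x y : ℚ) (U.KC y x : ℚ) := by
          have h1 : (n : ℚ) ≤ (U.KC x y : ℚ) := by exact_mod_cast hxK
          have := le_max_left (U.KC x y : ℚ) (U.KC y x : ℚ)
          linarith
        have hcond : (0 : ℚ) + ((H : ℚ) + c2) < ε' * n := by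
          have := hNs n hnNs
          push_cast at this ⊢
          linarith
        have := q_lower hε'0 hε'1 hD hDB (by positivity) hnum hcond
        linarith
      exact (Set.Ici_infinite _).mono hsub
    · -- upper bound for all large n
      set m : ℕ := ⌈(c1 : ℚ) / ε'⌉₊ + 1 with hmdef
      obtain ⟨N, hN⟩ := K_growth U m
      refine ⟨N, fun n hn xx yy hxl hyl => ?_⟩
      have hKx : m < U.K xx := hN n hn xx hxl
      have hKy : m < U.K yy := hN n hn yy hyl
      unfold PrefixUMachine.NID
      have hD : (0 : ℚ) < max (U.K xx : ℚ) (U.K yy : ℚ) := by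
        have : (0 : ℚ) < (U.K xx : ℚ) := by exact_mod_cast (show 0 < U.K xx by omega)
        exact lt_of_lt_of_le this (le_max_left _ _)
      have hnum : max (U.KC xx yy : ℚ) (U.KC yy xx : ℚ)
          ≤ max (U.K xx : ℚ) (U.K yy : ℚ) + c1 := by
        apply max_le
        · have : (U.KC xx yy : ℚ) ≤ (U.K xx : ℚ) + c1 := by exact_mod_cast hc1 xx yy
          exact le_trans this (by linarith [le_max_left (U.K xx : ℚ) (U.K yy : ℚ)])
        · have : (U.KC yy xx : ℚ) ≤ (U.K yy : ℚ) + c1 := by exact_mod_cast hc1 yy xx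
          exact le_trans this (by linarith [le_max_right (U.K xx : ℚ) (U.K yy : ℚ)])
      have hc : (c1 : ℚ) < ε * max (U.K xx : ℚ) (U.K yy : ℚ) := by
        have h1 : (c1 : ℚ) / ε' ≤ (⌈(c1 : ℚ) / ε'⌉₊ : ℚ) := Nat.le_ceil _
        have h2 : ((⌈(c1 : ℚ) / ε'⌉₊ : ℚ)) < (m : ℚ) := by rw [hmdef]; push_cast; linarith
        have h3 : (m : ℚ) < (U.K xx : ℚ) := by exact_mod_cast hKx
        have h4 : (c1 : ℚ) / ε' < (U.K xx : ℚ) := by linarith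
        rw [div_lt_iff₀ hε'0] at h4
        have h5 : (U.K xx : ℚ) ≤ max (U.K xx : ℚ) (U.K yy : ℚ) := le_max_left _ _
        have h6 : ε' * (U.K xx : ℚ) ≤ ε * max (U.K xx : ℚ) (U.K yy : ℚ) := by
          apply mul_le_mul hε'le h5 (by positivity) (le_of_lt hε)
        linarith
      exact q_upper hD hnum hc
  · -- part 3 : random strings
    intro x hx ε hε
    set ε' := min ε 1 with hε'def
    have hε'0 : 0 < ε' := lt_min hε one_pos
    have hε'le : ε' ≤ ε := min_le_left _ _
    have hε'1 : ε' ≤ 1 := min_le_right _ _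
    obtain ⟨Ns, hNs1, hNs⟩ := sub_lemma (2 + c2 + c3) 8 ε' hε'0
    set Nc : ℕ := ⌈(c1 : ℚ) / ε'⌉₊ + 1 with hNcdef
    refine ⟨max Ns Nc, fun n hn => ?_⟩
    have hnNs : Ns ≤ n := le_trans (le_max_left _ _) hn
    have hnNc : Nc ≤ n := le_trans (le_max_right _ _) hn
    have hn1 : 1 ≤ n := le_trans hNs1 hnNs
    obtain ⟨hzl, hzK⟩ := hx n
    set z := x n with hzdef
    set y := List.replicate n false with hydef
    have hyl : y.length = n := List.length_replicate
    set H : ℕ := 2 * (natBits n).length + 1 with hHdef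
    have hHsqrt : (H : ℚ) ≤ 4 * (Nat.sqrt n : ℚ) + 1 := by
      have := hdr_cost n hn1
      rw [hHdef]; push_cast; exact_mod_cast this
    have hHcast : (H : ℚ) = 2 * ((natBits n).length : ℚ) + 1 := by
      rw [hHdef]; push_cast; ring
    have hKz : U.K z ≤ n + H + c2 := by have := hKup z; rw [hzl] at this; omega
    have hKy : U.K y ≤ n + H + c2 := by have := hKup y; rw [hyl] at this; omega
    have hKClow : n ≤ U.KC z y + H + c3 := by
      have := hc3 z n
      rw [← hydef] at this
      omega
    unfold PrefixUMachine.NID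
    have hD : (0 : ℚ) < max (U.K z : ℚ) (U.K y : ℚ) := by
      have h1 : (1 : ℚ) ≤ (U.K z : ℚ) := by exact_mod_cast le_trans hn1 hzK
      linarith [le_max_left (U.K z : ℚ) (U.K y : ℚ)]
    have hDn : (n : ℚ) ≤ max (U.K z : ℚ) (U.K y : ℚ) := by
      have h1 : (n : ℚ) ≤ (U.K z : ℚ) := by exact_mod_cast hzK
      linarith [le_max_left (U.K z : ℚ) (U.K y : ℚ)]
    have hDB : max (U.K z : ℚ) (U.K y : ℚ) ≤ (n : ℚ) + ((H : ℚ) + c2) := by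
      apply max_le
      · have : (U.K z : ℚ) ≤ ((n + H + c2 : ℕ) : ℚ) := by exact_mod_cast hKz
        push_cast at this; linarith [hHcast]
      · have : (U.K y : ℚ) ≤ ((n + H + c2 : ℕ) : ℚ) := by exact_mod_cast hKy
        push_cast at this; linarith [hHcast]
    rw [abs_lt]
    constructor
    · -- lower
      have hnum : (n : ℚ) - ((H : ℚ) + c3) ≤ max (U.KC z y : ℚ) (U.KC y z : ℚ) := by
        have h1 : (n : ℚ) ≤ (U.KC z y : ℚ) + H + c3 := by exact_mod_cast hKClow
        linarith [le_max_left (U.KC z y : ℚ) (U.KC y z : ℚ)]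
      have hcond : ((H : ℚ) + c3) + ((H : ℚ) + c2) < ε' * n := by
        have := hNs n hnNs
        push_cast at this ⊢
        linarith
      have := q_lower hε'0 hε'1 hD hDB (by positivity) hnum hcond
      linarith
    · -- upper
      have hnum : max (U.KC z y : ℚ) (U.KC y z : ℚ)
          ≤ max (U.K z : ℚ) (U.K y : ℚ) + c1 := by
        apply max_le
        · have : (U.KC z y : ℚ) ≤ (U.K z : ℚ) + c1 := by exact_mod_cast hc1 z y
          exact le_trans this (by linarith [le_max_left (U.K z : ℚ) (U.K y : ℚ)])
        · have : (U.KC y z : ℚ) ≤ (U.K y : ℚ) + c1 := by exact_mod_cast hc1 y z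
          exact le_trans this (by linarith [le_max_right (U.K z : ℚ) (U.K y : ℚ)])
      have hc : (c1 : ℚ) < ε * max (U.K z : ℚ) (U.K y : ℚ) := by
        have h1 : (c1 : ℚ) / ε' ≤ (⌈(c1 : ℚ) / ε'⌉₊ : ℚ) := Nat.le_ceil _
        have h2 : ((⌈(c1 : ℚ) / ε'⌉₊ : ℚ)) < (Nc : ℚ) := by rw [hNcdef]; push_cast; linarith
        have h3 : (Nc : ℚ) ≤ (n : ℚ) := by exact_mod_cast hnNc
        have h4 : (c1 : ℚ) / ε' < max (U.K z : ℚ) (U.K y : ℚ) := by linarith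
        rw [div_lt_iff₀ hε'0] at h4
        have h6 : ε' * max (U.K z : ℚ) (U.K y : ℚ) ≤ ε * max (U.K z : ℚ) (U.K y : ℚ) := by
          apply mul_le_mul_of_nonneg_right hε'le (le_of_lt hD)
        linarith
      have := q_upper hD hnum hc
      linarith
end

section
/- NID is not approximable from above: there is no computable function f(x,y,s), nonincreasing in s, with lim_{s→∞} f(x,y,s) = NID(x,y) for all strings x, y. -/
namespace NIDAux
open Encodable Denumerable

/-- concrete base encoding of ℚ -/
def encB : ℚ → ℕ := @encode ℚ Rat.instEncodable

lemma encB_eq (q : ℚ) : encB q = Nat.pair (encode q.num) q.den := rfl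

lemma encode_int_ofNat (n : ℕ) : encode (Int.ofNat n) = 2 * n := rfl
lemma encode_int_negSucc (n : ℕ) : encode (Int.negSucc n) = 2 * n + 1 := rfl

lemma ofNat_int_even (a : ℕ) : Denumerable.ofNat ℤ (2 * a) = Int.ofNat a := by
  rw [← encode_int_ofNat, ofNat_encode]

lemma ofNat_int_odd (a : ℕ) : Denumerable.ofNat ℤ (2 * a + 1) = Int.negSucc a := by
  rw [← encode_int_negSucc, ofNat_encode]

lemma natAbs_ofNat_int (k : ℕ) : (Denumerable.ofNat ℤ k).natAbs = (k + 1) / 2 := by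
  rcases Nat.even_or_odd k with ⟨a, ha⟩ | ⟨a, ha⟩
  · have : k = 2 * a := by omega
    subst this
    rw [ofNat_int_even]
    simp [Int.natAbs]
    omega
  · have : k = 2 * a + 1 := by omega
    subst this
    rw [ofNat_int_odd]
    simp [Int.natAbs]
    omega

lemma encode_int_odd_iff (z : ℤ) : encode z % 2 = 1 ↔ z < 0 := by
  cases z with
  | ofNat n => rw [encode_int_ofNat]; simp only [Int.ofNat_eq_coe]; omega
  | negSucc n => rw [encode_int_negSucc]; simp only [Int.negSucc_lt_zero, iff_true]; omega

lemma toNat_eq_encode_div (z : ℤ) (h : 0 ≤ z) : z.toNat = encode z / 2 := by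
  cases z with
  | ofNat n => rw [encode_int_ofNat]; simp
  | negSucc n => exact absurd h (by simp)

def SQ : Set ℕ := Set.range encB

/-- the official encoding of ℚ used by the computability library -/
def encQ : ℚ → ℕ := @Encodable.encode ℚ (@Primcodable.toEncodable ℚ _)

lemma computable_encQ : Computable encQ := Computable.encode

lemma mem_SQ_iff (m : ℕ) :
    m ∈ SQ ↔ 0 < m.unpair.2 ∧ Nat.Coprime ((m.unpair.1 + 1) / 2) m.unpair.2 := by
  constructor
  · rintro ⟨q, rfl⟩
    rw [encB_eq, Nat.unpair_pair]
    refine ⟨q.pos, ?_⟩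
    have h := natAbs_ofNat_int (encode q.num)
    rw [ofNat_encode] at h
    rw [← h]
    exact q.reduced
  · rintro ⟨h1, h2⟩
    refine ⟨Rat.mk' (Denumerable.ofNat ℤ m.unpair.1) m.unpair.2
      (Nat.pos_iff_ne_zero.mp h1) (by rwa [natAbs_ofNat_int]), ?_⟩
    rw [encB_eq]
    simp only [Rat.mk'.injEq]
    show Nat.pair (encode (Denumerable.ofNat ℤ m.unpair.1)) m.unpair.2 = m
    rw [encode_ofNat, Nat.pair_unpair]


/-- bounded conjunction -/
def allB (a b n : ℕ) : Bool :=
  Nat.rec true (fun k ih => ih &&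
    !(decide (2 ≤ k) && decide (a % k = 0) && decide (b % k = 0))) n

lemma allB_iff (a b n : ℕ) :
    allB a b n = true ↔ ∀ k < n, ¬(2 ≤ k ∧ a % k = 0 ∧ b % k = 0) := by
  induction n with
  | zero => simp [allB]
  | succ n ih =>
    show (allB a b n && _) = true ↔ _
    rw [Bool.and_eq_true, ih]
    constructor
    · rintro ⟨h1, h2⟩ k hk
      rcases Nat.lt_succ_iff_lt_or_eq.mp hk with h | rfl
      · exact h1 k h
      · rintro ⟨ha, hb, hc⟩
        simp [ha, hb, hc] at h2
    · intro h
      refine ⟨fun k hk => h k (hk.trans (Nat.lt_succ_self n)), ?_⟩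
      have hn := h n (Nat.lt_succ_self n)
      by_contra hc
      simp only [Bool.not_eq_true', Bool.and_eq_false_iff, Bool.not_eq_false] at hc
      rcases Decidable.em (2 ≤ n) with h2 | h2
      · rcases Decidable.em (a % n = 0) with ha | ha
        · rcases Decidable.em (b % n = 0) with hb | hb
          · exact hn ⟨h2, ha, hb⟩
          · simp [h2, ha, hb] at hc
        · simp [h2, ha] at hc
      · simp [h2] at hc

def coprimeB (a b : ℕ) : Bool := allB a b (a + b + 3)

lemma coprimeB_iff (a b : ℕ) : coprimeB a b = true ↔ Nat.Coprime a b := by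
  rw [coprimeB, allB_iff]
  constructor
  · intro h
    by_contra hcop
    rcases Nat.eq_zero_or_pos (Nat.gcd a b) with hg | hg
    · obtain ⟨rfl, rfl⟩ := Nat.gcd_eq_zero_iff.mp hg
      exact h 2 (by omega) ⟨le_refl 2, rfl, rfl⟩
    · set g := Nat.gcd a b with hgdef
      have hg2 : 2 ≤ g := by
        rcases Nat.lt_or_ge g 2 with h2 | h2
        · interval_cases g <;> first | omega | exact absurd rfl hcop
        · exact h2
      have hda : g ∣ a := Nat.gcd_dvd_left a b
      have hdb : g ∣ b := Nat.gcd_dvd_right a b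
      have hlt : g < a + b + 3 := by
        rcases Nat.eq_zero_or_pos a with rfl | ha
        · have hb : 0 < b := by
            rcases Nat.eq_zero_or_pos b with rfl | hb
            · exact absurd (hgdef.trans (Nat.gcd_self 0)) (by omega)
            · exact hb
          have := Nat.le_of_dvd hb hdb; omega
        · have := Nat.le_of_dvd ha hda; omega
      exact h g hlt ⟨hg2, Nat.dvd_iff_mod_eq_zero.mp hda,
        Nat.dvd_iff_mod_eq_zero.mp hdb⟩
  · intro hcop k _ ⟨hk2, hka, hkb⟩
    have hka' : k ∣ a := Nat.dvd_of_mod_eq_zero hka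
    have hkb' : k ∣ b := Nat.dvd_of_mod_eq_zero hkb
    have : k ∣ Nat.gcd a b := Nat.dvd_gcd hka' hkb'
    rw [hcop] at this
    have := Nat.le_of_dvd one_pos this
    omega


def DS : ℕ → Bool := fun m =>
  decide (0 < m.unpair.2) && coprimeB ((m.unpair.1 + 1) / 2) m.unpair.2

lemma DS_iff (m : ℕ) : DS m = true ↔ m ∈ SQ := by
  rw [mem_SQ_iff, DS, Bool.and_eq_true, decide_eq_true_eq, coprimeB_iff]

open Primrec in
lemma primrec_coprimeB : Primrec₂ coprimeB := by
  have hstep : Primrec₂ fun (a : (ℕ × ℕ) × ℕ) (p : ℕ × Bool) =>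
      p.2 && !(decide (2 ≤ p.1) && decide (a.1.1 % p.1 = 0) && decide (a.1.2 % p.1 = 0)) := by
    have h2le : Primrec fun (q : ((ℕ × ℕ) × ℕ) × (ℕ × Bool)) => decide (2 ≤ q.2.1) :=
      (PrimrecRel.comp nat_le (const 2) (fst.comp snd)).decide
    have hma : Primrec fun (q : ((ℕ × ℕ) × ℕ) × (ℕ × Bool)) => decide (q.1.1.1 % q.2.1 = 0) :=
      PrimrecRel.comp Primrec.eq (nat_mod.comp (fst.comp (fst.comp fst)) (fst.comp snd))
        (const 0) |>.decide
    have hmb : Primrec fun (q : ((ℕ × ℕ) × ℕ) × (ℕ × Bool)) => decide (q.1.1.2 % q.2.1 = 0) :=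
      PrimrecRel.comp Primrec.eq (nat_mod.comp (snd.comp (fst.comp fst)) (fst.comp snd))
        (const 0) |>.decide
    have hand : Primrec₂ (· && · : Bool → Bool → Bool) := dom_bool₂ _
    have hnot : Primrec (! · : Bool → Bool) := dom_bool _
    exact (hand.comp (snd.comp snd)
      (hnot.comp (hand.comp (hand.comp h2le hma) hmb))).to₂
  have hall : Primrec fun a : (ℕ × ℕ) × ℕ => allB a.1.1 a.1.2 a.2 :=
    Primrec.nat_rec' snd (const true) hstep
  have : Primrec₂ fun (p : ℕ × ℕ) (n : ℕ) => allB p.1 p.2 n := hall.to₂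
  exact (this.comp Primrec.id
    (nat_add.comp (nat_add.comp fst snd) (const 3))).to₂

open Primrec in
lemma primrec_DS : Primrec DS := by
  have h1 : Primrec fun m : ℕ => decide (0 < m.unpair.2) :=
    (PrimrecRel.comp nat_lt (const 0) (snd.comp Primrec.unpair)).decide
  have h2 : Primrec fun m : ℕ => coprimeB ((m.unpair.1 + 1) / 2) m.unpair.2 :=
    primrec_coprimeB.comp
      (nat_div.comp (nat_add.comp (fst.comp Primrec.unpair) (const 1)) (const 2))
      (snd.comp Primrec.unpair)
  exact ((dom_bool₂ (· && ·)).comp h1 h2)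

theorem computable_search {α : Type*} [Primcodable α] {P : α → ℕ → Bool}
    (hP : Computable₂ P) (hex : ∀ a, ∃ k, P a k = true) :
    ∃ g : α → ℕ, Computable g ∧ (∀ a, P a (g a) = true) ∧ ∀ a j, j < g a → P a j = false := by
  have hpr : Partrec fun a => Nat.rfind (fun k => Part.some (P a k)) := by
    apply Partrec.rfind
    exact (hP.partrec₂ : Partrec₂ _)
  have hdom : ∀ a, (Nat.rfind (fun k => Part.some (P a k))).Dom := by
    intro a
    obtain ⟨k, hk⟩ := hex a
    exact Nat.rfind_dom.mpr ⟨k, by simp [hk], fun _ => trivial⟩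
  refine ⟨fun a => (Nat.rfind (fun k => Part.some (P a k))).get (hdom a), ?_, ?_, ?_⟩
  · exact hpr.of_eq fun a => (Part.some_get (hdom a)).symm
  · intro a
    have := Nat.rfind_spec (Part.get_mem (hdom a))
    simpa using this
  · intro a j hj
    have := Nat.rfind_min (Part.get_mem (hdom a)) hj
    simpa using this

lemma SQ_infinite : SQ.Infinite :=
  Set.infinite_range_of_injective (@Encodable.encode_injective ℚ Rat.instEncodable)

lemma zero_not_mem_SQ : (0 : ℕ) ∉ SQ := by
  rw [← DS_iff]
  simp [DS]


set_option maxHeartbeats 2000000 in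
def testOfCode (n m : ℕ) : Bool :=
  decide (m.unpair.1 % 2 = 1) || decide (m.unpair.1 / 2 * (n + 1) < m.unpair.2)

open Primrec in
lemma primrec_testOfCode : Primrec₂ testOfCode := by
  have h1 : Primrec fun p : ℕ × ℕ => decide (p.2.unpair.1 % 2 = 1) :=
    PrimrecRel.comp Primrec.eq
      (nat_mod.comp (fst.comp (Primrec.unpair.comp snd)) (const 2)) (const 1) |>.decide
  have h2 : Primrec fun p : ℕ × ℕ => decide (p.2.unpair.1 / 2 * (p.1 + 1) < p.2.unpair.2) :=
    PrimrecRel.comp nat_lt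
      (nat_mul.comp (nat_div.comp (fst.comp (Primrec.unpair.comp snd)) (const 2))
        (nat_add.comp fst (const 1)))
      (snd.comp (Primrec.unpair.comp snd)) |>.decide
  exact ((dom_bool₂ (· || ·)).comp h1 h2).to₂

theorem exists_qtest : ∃ T : ℕ → ℚ → Bool, Computable₂ T ∧
    ∀ (n : ℕ) (q : ℚ), T n q = true ↔ q < 1 / ((n : ℚ) + 1) := by
  classical
  -- the successor function on SQ
  obtain ⟨g, hgC, hgt, hgmin⟩ := computable_search (P := fun (x k : ℕ) => DS (x + 1 + k))
    (((primrec_DS.comp (Primrec.nat_add.comp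
        (Primrec.nat_add.comp Primrec.fst (Primrec.const 1)) Primrec.snd)).to₂).to_comp)
    (by
      intro x
      obtain ⟨b, hb, hgtb⟩ := SQ_infinite.exists_gt x
      refine ⟨b - (x + 1), ?_⟩
      show DS (x + 1 + (b - (x + 1))) = true
      rw [show x + 1 + (b - (x + 1)) = b by omega]
      exact (DS_iff b).mpr hb)
  set next : ℕ → ℕ := fun x => x + 1 + g x with hnextdef
  have hnextC : Computable next :=
    (Primrec.nat_add.to_comp).comp
      ((Primrec.nat_add.comp Primrec.id (Primrec.const 1)).to_comp) hgC
  have hnext_mem : ∀ x, next x ∈ SQ := fun x => (DS_iff _).mp (hgt x)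
  have hnext_gt : ∀ x, x < next x := fun x => by simp [hnextdef]; omega
  have hnext_min : ∀ x m, m ∈ SQ → x < m → next x ≤ m := by
    intro x m hm hxm
    by_contra hlt
    push_neg at hlt
    have hj : m - (x + 1) < g x := by simp [hnextdef] at hlt; omega
    have hfalse := hgmin x _ hj
    rw [show x + 1 + (m - (x + 1)) = m by omega] at hfalse
    have htrue := (DS_iff m).mpr hm
    rw [hfalse] at htrue
    exact Bool.false_ne_true htrue
  have hnext_eq : ∀ x a, a ∈ SQ → x < a → (∀ m ∈ SQ, x < m → a ≤ m) → next x = a :=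
    fun x a ha hxa hmin =>
      le_antisymm (hnext_min x a ha hxa) (hmin _ (hnext_mem x) (hnext_gt x))
  -- the increasing enumeration of SQ
  set F : ℕ → ℕ := fun n => Nat.rec (motive := fun _ => ℕ) (next 0) (fun _ ih => next ih) n
    with hFdef
  have hFC : Computable F := by
    have hh : Computable₂ (fun (_ : ℕ) (p : ℕ × ℕ) => next p.2) :=
      (hnextC.comp ((Primrec.snd.comp Primrec.snd).to_comp)).to₂
    have h := Computable.nat_rec (f := @id ℕ) (g := fun _ : ℕ => next 0)
      (h := fun (_ : ℕ) (p : ℕ × ℕ) => next p.2) Computable.id (Computable.const (next 0)) hh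
    exact h.of_eq (fun n => rfl)
  -- link with the official encoding of ℚ
  letI instD : DecidablePred (· ∈ SQ) :=
    @Encodable.decidableRangeEncode ℚ Rat.instEncodable
  haveI instI : Infinite ↥SQ :=
    Infinite.of_injective _ (Equiv.ofInjective encB (@Encodable.encode_injective ℚ Rat.instEncodable)).injective
  have unfoldQ : ∀ n : ℕ, encB (Denumerable.ofNat ℚ n)
      = ↑(Nat.Subtype.ofNat SQ n) := by
    intro n
    have h1 : Denumerable.ofNat ℚ n
        = (Encodable.equivRangeEncode ℚ).symm
            (Nat.Subtype.ofNat (SQ) n) := rfl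
    rw [h1]
    exact congrArg Subtype.val (Equiv.apply_symm_apply (Encodable.equivRangeEncode ℚ) _)
  have hmemSQ : ∀ x : ↥SQ, (x : ℕ) ∈ SQ := fun x => x.2
  have hF_eq : ∀ n, F n = encB (Denumerable.ofNat ℚ n) := by
    intro n
    induction n with
    | zero =>
      rw [unfoldQ 0]
      show next 0 = _
      apply hnext_eq
      · exact hmemSQ _
      · exact Nat.pos_of_ne_zero (fun h => zero_not_mem_SQ (h ▸ hmemSQ _))
      · intro m hm _
        exact Subtype.coe_le_coe.mpr (bot_le (a := (⟨m, hm⟩ : ↥SQ)))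
    | succ n ih =>
      rw [unfoldQ (n+1)]
      have ih' : F n = ↑(Nat.Subtype.ofNat SQ n) := ih.trans (unfoldQ n)
      show next (F n) = ↑(Nat.Subtype.succ (Nat.Subtype.ofNat SQ n))
      rw [ih']
      apply hnext_eq
      · exact hmemSQ _
      · exact Subtype.coe_lt_coe.mpr (Nat.Subtype.lt_succ_self _)
      · intro m hm hxm
        exact Subtype.coe_le_coe.mpr
          (Nat.Subtype.succ_le_of_lt (x := ⟨m, hm⟩) (Subtype.coe_lt_coe.mp hxm))
  have TheLink : ∀ q : ℚ, F (encQ q) = encB q := by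
    intro q
    have h1 : F (encQ q) = encB (Denumerable.ofNat ℚ (encQ q)) := hF_eq _
    rw [h1]
    exact congrArg encB (Denumerable.ofNat_encode q)
  -- the test
  refine ⟨fun n q => testOfCode n (F (encQ q)), ?_, ?_⟩
  · exact (primrec_testOfCode.to_comp.comp Computable.fst
      (hFC.comp (computable_encQ.comp Computable.snd))).to₂
  · intro n q
    simp only [testOfCode]
    rw [Bool.or_eq_true, TheLink q, encB_eq, Nat.unpair_pair]
    rcases lt_or_ge q.num 0 with hneg | hpos
    · have hodd : Encodable.encode q.num % 2 = 1 := (encode_int_odd_iff _).mpr hneg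
      simp only [hodd, decide_eq_true_eq]
      constructor
      · intro _
        exact lt_trans (Rat.num_neg.mp hneg) (by positivity)
      · intro _
        left; trivial
    · have heven : ¬(Encodable.encode q.num % 2 = 1) :=
        fun hc => absurd ((encode_int_odd_iff _).mp hc) (not_lt.mpr hpos)
      have htn : q.num.toNat = Encodable.encode q.num / 2 := toNat_eq_encode_div _ hpos
      have key : q < 1 / ((n : ℚ) + 1) ↔ q.num * ((n : ℤ) + 1) < (q.den : ℤ) := by
        conv_lhs => rw [← Rat.num_div_den q]
        rw [div_lt_div_iff₀ (by exact_mod_cast q.pos) (by positivity), one_mul]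
        constructor
        · intro h; exact_mod_cast h
        · intro h; exact_mod_cast h
      simp only [heven, decide_eq_true_eq, false_or, ← htn, key]
      constructor
      · intro hlt
        have h2 : ((q.num.toNat * (n + 1) : ℕ) : ℤ) < ((q.den : ℕ) : ℤ) := Int.ofNat_lt.mpr hlt
        push_cast [Int.toNat_of_nonneg hpos] at h2
        exact h2
      · intro hlt
        have h2 : ((q.num.toNat * (n + 1) : ℕ) : ℤ) < ((q.den : ℕ) : ℤ) := by
          push_cast [Int.toNat_of_nonneg hpos]
          exact hlt
        exact_mod_cast h2


def rep : ℕ → List Bool := fun n => Nat.rec [] (fun _ ih => false :: ih) n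

lemma rep_eq (n : ℕ) : rep n = List.replicate n false := by
  induction n with
  | zero => rfl
  | succ n ih => show false :: rep n = _; rw [ih, List.replicate_succ]

open Primrec in
lemma primrec_rep : Primrec rep :=
  Primrec.nat_rec₁ [] ((list_cons.comp (const false) snd).to₂)

def isE (p : List Bool) : Bool := decide (p = rep (p.length - 1) ++ [true])

open Primrec in
lemma primrec_isE : Primrec isE :=
  PrimrecRel.comp Primrec.eq Primrec.id
    (list_append.comp (primrec_rep.comp (nat_sub.comp list_length (const 1)))
      (const [true])) |>.decide

lemma isE_iff (p : List Bool) : isE p = true ↔ ∃ m, p = List.replicate m false ++ [true] := by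
  rw [isE, decide_eq_true_eq]
  constructor
  · intro hp
    exact ⟨p.length - 1, by rw [rep_eq] at hp; exact hp⟩
  · rintro ⟨m, rfl⟩
    rw [rep_eq]
    congr 1
    simp

lemma isE_prefix {p q : List Bool} (hp : isE p = true) (hq : isE q = true)
    (hpre : p <+: q) : p = q := by
  obtain ⟨m, rfl⟩ := (isE_iff p).mp hp
  obtain ⟨m', rfl⟩ := (isE_iff q).mp hq
  have hle : m ≤ m' := by
    have := hpre.length_le
    simpa using this
  rcases eq_or_lt_of_le hle with rfl | hlt
  · rfl
  · exfalso
    obtain ⟨t, ht⟩ := hpre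
    have h1 : ((List.replicate m false ++ [true]) ++ t)[m]? = some true := by
      rw [List.getElem?_append_left (by simp)]
      rw [List.getElem?_append_right (by simp)]
      simp
    have h2 : (List.replicate m' false ++ [true])[m]? = some false := by
      rw [List.getElem?_append_left (by simp [hlt])]
      simp [hlt]
    rw [ht] at h1
    rw [h1] at h2
    simp at h2

end NIDAux


open PrefixUMachine

namespace PrefixUMachine

lemma kc_le {U : PrefixUMachine} {x y p : List Bool} (h : x ∈ U.eval p y) :
    U.KC x y ≤ p.length :=
  Nat.sInf_le ⟨p, rfl, h⟩

lemma one_le_kc (U : PrefixUMachine) (x y : List Bool) : 1 ≤ U.KC x y := by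
  by_contra hlt
  push_neg at hlt
  obtain ⟨p, hp, hlen⟩ := exists_min U x y
  have hp0 : p = [] := List.length_eq_zero_iff.mp (by omega)
  subst hp0
  obtain ⟨q, hq⟩ := U.total (true :: x) y
  have hdq : (U.eval q y).Dom := Part.dom_iff_mem.mpr ⟨_, hq⟩
  have hdp : (U.eval [] y).Dom := Part.dom_iff_mem.mpr ⟨_, hp⟩
  have hq0 : ([] : List Bool) = q := U.prefixFree y [] q hdp hdq (List.nil_prefix)
  rw [← hq0] at hq
  have := Part.mem_unique hp hq
  simp at this

lemma exists_K_gt (U : PrefixUMachine) (n : ℕ) : ∃ x, n < U.K x := by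
  classical
  set F : List Bool → List Bool := fun p =>
    if h : (U.eval p []).Dom then (U.eval p []).get h else [] with hF
  have hsub : {x | U.K x ≤ n} ⊆ F '' {p : List Bool | p.length ≤ n} := by
    intro x hx
    obtain ⟨p, hp, hlen⟩ := exists_min U x []
    refine ⟨p, by rw [Set.mem_setOf_eq, hlen]; exact hx, ?_⟩
    have hd : (U.eval p []).Dom := Part.dom_iff_mem.mpr ⟨_, hp⟩
    rw [hF]
    simp only [hd, dif_pos]
    exact Part.get_eq_of_mem hp hd
  have hfin : {x | U.K x ≤ n}.Finite :=
    Set.Finite.subset ((List.finite_length_le Bool n).image F) hsub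
  obtain ⟨x, hx⟩ := hfin.infinite_compl.nonempty
  exact ⟨x, by simpa using hx⟩

lemma exists_c0 (U : PrefixUMachine) : ∃ c, ∀ x, U.KC x x ≤ c := by
  set M : List Bool → List Bool → Part (List Bool) := fun p y =>
    bif decide (p = []) then Part.some y else Part.none with hM
  have hMC : Partrec fun pr : List Bool × List Bool => M pr.1 pr.2 := by
    apply Partrec.cond
    · exact (PrimrecRel.comp Primrec.eq Primrec.fst (Primrec.const [])).decide.to_comp
    · exact Computable.snd
    · exact Partrec.none
  have hMpf : ∀ y p q, (M p y).Dom → (M q y).Dom → p <+: q → p = q := by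
    intro y p q hdp hdq _
    have h1 : p = [] := by
      by_contra hne
      rw [hM] at hdp
      simp [hne] at hdp
    have h2 : q = [] := by
      by_contra hne
      rw [hM] at hdq
      simp [hne] at hdq
    rw [h1, h2]
  obtain ⟨c, hc⟩ := U.universal M hMC hMpf
  refine ⟨c, fun x => ?_⟩
  have hx : x ∈ M [] x := by
    rw [hM]
    simp
  obtain ⟨q, hq, hlen⟩ := hc x x [] hx
  exact le_trans (kc_le hq) (by simpa using hlen)

end PrefixUMachine

open PrefixUMachine

/-- `NID` is not approximable from above: no computable approximation that is
nonincreasing in the stage converges to `NID`. -/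
theorem nid_not_pi1 (U : PrefixUMachine) :
    ¬ ∃ f : List Bool → List Bool → ℕ → ℚ,
      Computable (fun q : (List Bool × List Bool) × ℕ => f q.1.1 q.1.2 q.2) ∧
      ∀ x y : List Bool, Antitone (f x y) ∧
        ∀ ε : ℚ, 0 < ε → ∃ s, ∀ t, s ≤ t → |f x y t - U.NID x y| < ε := by
  rintro ⟨f, hfC, hf⟩
  obtain ⟨c₀, hc₀⟩ := exists_c0 U
  -- the approximation is always at least the limit
  have hge : ∀ x y s, U.NID x y ≤ f x y s := by
    intro x y s
    by_contra hlt
    push_neg at hlt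
    obtain ⟨s₀, hs₀⟩ := (hf x y).2 (U.NID x y - f x y s) (by linarith)
    have h1 := hs₀ (max s₀ s) (le_max_left _ _)
    have h2 : f x y (max s₀ s) ≤ f x y s := (hf x y).1 (le_max_right _ _)
    rw [abs_lt] at h1
    linarith
  have hKpos : ∀ x : List Bool, 0 < (U.K x : ℚ) := by
    intro x
    have := one_le_kc U x []
    exact_mod_cast lt_of_lt_of_le one_pos (by exact_mod_cast this)
  have hNIDxx : ∀ x : List Bool, U.NID x x = (U.KC x x : ℚ) / (U.K x : ℚ) := by
    intro x
    rw [NID, max_self, max_self]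
  have hlow : ∀ x : List Bool, 1 / (U.K x : ℚ) ≤ U.NID x x := by
    intro x
    rw [hNIDxx]
    exact (div_le_div_iff_of_pos_right (hKpos x)).mpr (by exact_mod_cast one_le_kc U x x)
  have hup : ∀ x : List Bool, U.NID x x ≤ (c₀ : ℚ) / (U.K x : ℚ) := by
    intro x
    rw [hNIDxx]
    exact (div_le_div_iff_of_pos_right (hKpos x)).mpr (by exact_mod_cast hc₀ x)
  obtain ⟨T, hTC, hT⟩ := NIDAux.exists_qtest
  -- the search predicate
  set P : ℕ → ℕ → Bool := fun n k =>
    (Encodable.decode (α := List Bool × ℕ) k).casesOn false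
      (fun xs => T n (f xs.1 xs.1 xs.2)) with hPdef
  have hPC : Computable₂ P := by
    apply Computable.option_casesOn (Computable.decode.comp Computable.snd)
      (Computable.const false)
    exact (hTC.comp (Computable.fst.comp Computable.fst)
      (hfC.comp (((Computable.fst.comp Computable.snd).pair
        (Computable.fst.comp Computable.snd)).pair
        (Computable.snd.comp Computable.snd)))).to₂
  have hex : ∀ n, ∃ k, P n k = true := by
    intro n
    obtain ⟨x, hx⟩ := exists_K_gt U (c₀ * (n + 1))
    have hub : U.NID x x < 1 / ((n : ℚ) + 1) := by
      refine lt_of_le_of_lt (hup x) ?_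
      rw [div_lt_div_iff₀ (hKpos x) (by positivity), one_mul]
      have : ((c₀ * (n + 1) : ℕ) : ℚ) < U.K x := by exact_mod_cast hx
      push_cast at this
      linarith
    obtain ⟨s, hs⟩ := (hf x x).2 (1 / ((n : ℚ) + 1) - U.NID x x) (by linarith)
    have h1 := hs s le_rfl
    rw [abs_lt] at h1
    have hlt : f x x s < 1 / ((n : ℚ) + 1) := by linarith
    refine ⟨Encodable.encode ((x, s) : List Bool × ℕ), ?_⟩
    rw [hPdef]
    simp only [Encodable.encodek]
    exact (hT n _).mpr hlt
  obtain ⟨g, hgC, hgtrue, _⟩ := NIDAux.computable_search hPC hex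
  set h : ℕ → List Bool := fun n =>
    ((Encodable.decode (α := List Bool × ℕ) (g n)).map Prod.fst).getD [] with hhdef
  have hhC : Computable h := by
    apply Computable.option_getD
    · exact Computable.option_map (Computable.decode.comp hgC)
        ((Computable.fst.comp Computable.snd).to₂)
    · exact Computable.const []
  have hKh : ∀ n, n + 2 ≤ U.K (h n) := by
    intro n
    have hPn : (Encodable.decode (α := List Bool × ℕ) (g n)).casesOn false
        (fun xs => T n (f xs.1 xs.1 xs.2)) = true := hgtrue n
    cases hdec : Encodable.decode (α := List Bool × ℕ) (g n) with
    | none => rw [hdec] at hPn; simp at hPn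
    | some xs =>
      rw [hdec] at hPn
      have hlt : f xs.1 xs.1 xs.2 < 1 / ((n : ℚ) + 1) := (hT n _).mp hPn
      have hchain : 1 / (U.K xs.1 : ℚ) < 1 / ((n : ℚ) + 1) :=
        lt_of_le_of_lt (le_trans (hlow xs.1) (hge xs.1 xs.1 xs.2)) hlt
      have hK : (n : ℚ) + 1 < U.K xs.1 := by
        rw [div_lt_div_iff₀ (hKpos xs.1) (by positivity), one_mul, one_mul] at hchain
        exact hchain
      have hKn : n + 1 < U.K xs.1 := by exact_mod_cast hK
      have hhn : h n = xs.1 := by rw [hhdef]; simp [hdec]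
      rw [hhn]
      omega
  -- the final prefix machine
  set M : List Bool → List Bool → Part (List Bool) := fun p _ =>
    bif NIDAux.isE p then Part.some (h (2 * (p.length - 1))) else Part.none with hM
  have hMC : Partrec fun pr : List Bool × List Bool => M pr.1 pr.2 := by
    apply Partrec.cond
    · exact NIDAux.primrec_isE.to_comp.comp Computable.fst
    · exact hhC.comp ((Primrec.nat_mul.comp (Primrec.const 2)
        (Primrec.nat_sub.comp (Primrec.list_length.comp Primrec.fst)
          (Primrec.const 1))).to_comp)
    · exact Partrec.none
  have hMpf : ∀ y p q, (M p y).Dom → (M q y).Dom → p <+: q → p = q := by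
    intro y p q hdp hdq hpre
    have h1 : NIDAux.isE p = true := by
      by_contra hne
      rw [hM] at hdp
      simp only [Bool.not_eq_true] at hne
      simp [hne] at hdp
    have h2 : NIDAux.isE q = true := by
      by_contra hne
      rw [hM] at hdq
      simp only [Bool.not_eq_true] at hne
      simp [hne] at hdq
    exact NIDAux.isE_prefix h1 h2 hpre
  obtain ⟨c₁, hc₁⟩ := U.universal M hMC hMpf
  have hmem : ∀ m : ℕ, h (2 * m) ∈ M (List.replicate m false ++ [true]) [] := by
    intro m
    have hE : NIDAux.isE (List.replicate m false ++ [true]) = true :=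
      (NIDAux.isE_iff _).mpr ⟨m, rfl⟩
    rw [hM]
    simp only [hE, Bool.cond_true, List.length_append, List.length_replicate,
      List.length_singleton]
    rw [show m + 1 - 1 = m by omega]
    exact Part.mem_some _
  obtain ⟨q, hq, hlen⟩ := hc₁ _ [] _ (hmem (c₁ + 1))
  have hK1 : U.K (h (2 * (c₁ + 1))) ≤ q.length := kc_le hq
  have hK2 := hKh (2 * (c₁ + 1))
  have hql : q.length ≤ (c₁ + 1) + 1 + c₁ := by
    simpa using hlen
  omega
end

section
/- There is no computable sequence of pairs of strings (xₙ, yₙ) with |xₙ| = |yₙ| such that NID(xₙ, yₙ) < 1/n for every n ≥ 1. -/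
open PrefixUMachine

namespace NIDAux

open Primrec

lemma primrec_two_pow : Primrec (fun k : ℕ => 2 ^ k) := by
  have h : Primrec (fun k : ℕ => (Nat.rec 1 (fun _ IH => 2 * IH) k : ℕ)) :=
    Primrec.nat_rec₁ 1 (Primrec.nat_mul.comp₂ (Primrec₂.const 2) Primrec₂.right)
  exact h.of_eq fun k => by
    induction k with
    | zero => rfl
    | succ k ih => simp [pow_succ, ← ih]; ring

lemma primrec_replicate_true : Primrec (fun k : ℕ => List.replicate k true) := by
  have h : Primrec (fun k : ℕ => (Nat.rec [] (fun _ IH => true :: IH) k : List Bool)) :=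
    Primrec.nat_rec₁ [] (Primrec.list_cons.comp₂ (Primrec₂.const true) Primrec₂.right)
  exact h.of_eq fun k => by
    induction k with
    | zero => rfl
    | succ k ih => simp [List.replicate_succ, ← ih]

lemma primrec_drop : Primrec₂ (fun (l : List Bool) (n : ℕ) => l.drop n) := by
  have h := Primrec.nat_rec (f := fun l : List Bool => l)
    (g := fun (_ : List Bool) (p : ℕ × List Bool) => p.2.tail)
    Primrec.id (Primrec.list_tail.comp₂ (Primrec.snd.comp₂ Primrec₂.right))
  exact h.of_eq fun l n => by
    induction n with
    | zero => rfl
    | succ n ih => simp only [ih]; exact List.tail_drop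

lemma primrec_take : Primrec₂ (fun (l : List Bool) (n : ℕ) => l.take n) := by
  have htl : Primrec (fun o : Option Bool => o.toList) := by
    have := Primrec.option_casesOn (o := fun o : Option Bool => o)
      (f := fun _ => ([] : List Bool)) (g := fun _ b => [b])
      Primrec.id (Primrec.const [])
      (Primrec.list_cons.comp₂ Primrec₂.right (Primrec₂.const []))
    exact this.of_eq fun o => by cases o <;> rfl
  have h := Primrec.nat_rec (f := fun _ : List Bool => ([] : List Bool))
    (g := fun (l : List Bool) (p : ℕ × List Bool) => p.2 ++ (l[p.1]?).toList)
    (Primrec.const []) ((Primrec.list_append.comp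
      (Primrec.snd.comp Primrec.snd)
      (htl.comp (Primrec.list_getElem?.comp Primrec.fst (Primrec.fst.comp Primrec.snd)))).to₂)
  exact h.of_eq fun l n => by
    induction n with
    | zero => rfl
    | succ n ih => simp only [ih]; exact (List.take_succ).symm

lemma unary_prefix : ∀ a b : ℕ,
    List.replicate a true ++ [false] <+: List.replicate b true ++ [false] → a = b := by
  intro a
  induction a with
  | zero =>
    intro b h
    cases b with
    | zero => rfl
    | succ b =>
      rcases h with ⟨t, ht⟩
      simp [List.replicate_succ] at ht
  | succ a ih =>
    intro b h
    cases b with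
    | zero =>
      have := h.length_le
      simp at this
    | succ b =>
      simp only [List.replicate_succ, List.cons_append, List.cons_prefix_cons] at h
      exact congrArg Nat.succ (ih b h.2)

/-- The encoding machine: program `1^k 0` (with any condition) outputs `x_{2^k} ++ y_{2^k}`. -/
def Mg (g : ℕ → List Bool × List Bool) (p _y : List Bool) : Part (List Bool) :=
  ((bif decide (p = List.replicate (p.length - 1) true ++ [false])
    then some ((g (2 ^ (p.length - 1))).1 ++ (g (2 ^ (p.length - 1))).2)
    else none : Option (List Bool)) : Part (List Bool))

lemma Mg_partrec {g : ℕ → List Bool × List Bool} (hg : Computable g) :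
    Partrec fun pr : List Bool × List Bool => Mg g pr.1 pr.2 := by
  have hlen1 : Primrec (fun p : List Bool => p.length - 1) :=
    Primrec.pred.comp Primrec.list_length
  have hb : Computable (fun pr : List Bool × List Bool =>
      decide (pr.1 = List.replicate (pr.1.length - 1) true ++ [false])) :=
    (Primrec.eq.comp Primrec.fst
      ((Primrec.list_append.comp (primrec_replicate_true.comp (hlen1.comp Primrec.fst))
        (Primrec.const [false])))).decide.to_comp
  have hgc : Computable (fun pr : List Bool × List Bool => g (2 ^ (pr.1.length - 1))) :=
    hg.comp ((primrec_two_pow.comp (hlen1.comp Primrec.fst)).to_comp)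
  have hval : Computable (fun pr : List Bool × List Bool =>
      (g (2 ^ (pr.1.length - 1))).1 ++ (g (2 ^ (pr.1.length - 1))).2) :=
    Primrec.list_append.to_comp.comp (Computable.fst.comp hgc) (Computable.snd.comp hgc)
  exact Computable.ofOption (Computable.cond hb (Computable.option_some.comp hval)
    (Computable.const none))

lemma Mg_dom {g : ℕ → List Bool × List Bool} {p y : List Bool} (h : (Mg g p y).Dom) :
    p = List.replicate (p.length - 1) true ++ [false] := by
  by_contra hne
  have hb : decide (p = List.replicate (p.length - 1) true ++ [false]) = false := by
    simpa using hne
  simp [Mg, hb] at h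

lemma Mg_prefixFree (g : ℕ → List Bool × List Bool) :
    ∀ y p q, (Mg g p y).Dom → (Mg g q y).Dom → p <+: q → p = q := by
  intro y p q hp hq hpq
  have hp' := Mg_dom hp
  have hq' := Mg_dom hq
  rw [hp', hq'] at hpq
  rw [hp', hq', unary_prefix _ _ hpq]

lemma Mg_mem (g : ℕ → List Bool × List Bool) (k : ℕ) (y : List Bool) :
    ((g (2 ^ k)).1 ++ (g (2 ^ k)).2) ∈ Mg g (List.replicate k true ++ [false]) y := by
  have hlen : (List.replicate k true ++ [false]).length - 1 = k := by simp
  have hb : decide ((List.replicate k true ++ [false]) =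
      List.replicate ((List.replicate k true ++ [false]).length - 1) true ++ [false]) = true := by
    rw [hlen]; simp
  rw [Mg, hb, hlen]
  simp [Part.mem_coe]

/-- Projection machines. -/
def M1 (U : PrefixUMachine) (p y : List Bool) : Part (List Bool) :=
  (U.eval p y).map (fun z => z.take (z.length / 2))

def M2 (U : PrefixUMachine) (p y : List Bool) : Part (List Bool) :=
  (U.eval p y).map (fun z => z.drop (z.length / 2))

lemma halfLen_primrec : Primrec (fun z : List Bool => z.length / 2) :=
  Primrec.nat_div.comp Primrec.list_length (Primrec.const 2)

lemma M1_partrec (U : PrefixUMachine) :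
    Partrec fun pr : List Bool × List Bool => M1 U pr.1 pr.2 :=
  U.partrec.map (((primrec_take.comp Primrec.id halfLen_primrec).to_comp.comp
    Computable.snd).to₂)

lemma M2_partrec (U : PrefixUMachine) :
    Partrec fun pr : List Bool × List Bool => M2 U pr.1 pr.2 :=
  U.partrec.map (((primrec_drop.comp Primrec.id halfLen_primrec).to_comp.comp
    Computable.snd).to₂)

lemma map_dom {α β : Type*} {o : Part α} {f : α → β} (h : ((o.map f)).Dom) : o.Dom := by
  obtain ⟨a, ha⟩ := Part.dom_iff_mem.mp h
  obtain ⟨b, hb, -⟩ := (Part.mem_map_iff _).mp ha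
  exact Part.dom_iff_mem.mpr ⟨b, hb⟩

lemma M1_prefixFree (U : PrefixUMachine) :
    ∀ y p q, (M1 U p y).Dom → (M1 U q y).Dom → p <+: q → p = q :=
  fun y p q hp hq hpq => U.prefixFree y p q (map_dom hp) (map_dom hq) hpq

lemma M2_prefixFree (U : PrefixUMachine) :
    ∀ y p q, (M2 U p y).Dom → (M2 U q y).Dom → p <+: q → p = q :=
  fun y p q hp hq hpq => U.prefixFree y p q (map_dom hp) (map_dom hq) hpq

end NIDAux


/-- There is no computable sequence of pairs `(xₙ, yₙ)` with `|xₙ| = |yₙ|`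
such that `NID(xₙ, yₙ) < 1/n` for every `n ≥ 1`. -/
theorem no_computable_small_nid_sequence (U : PrefixUMachine) :
    ¬ ∃ g : ℕ → List Bool × List Bool, Computable g ∧
      ∀ n : ℕ, 1 ≤ n → (g n).1.length = (g n).2.length ∧
        U.NID (g n).1 (g n).2 < 1 / (n : ℚ) := by
  rintro ⟨g, hg, hprop⟩
  classical
  -- the empty program never halts
  have hnil : ∀ y : List Bool, ¬ (U.eval [] y).Dom := by
    intro y h
    obtain ⟨p1, hp1⟩ := U.total [true] y
    obtain ⟨p2, hp2⟩ := U.total [false] y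
    have d1 : (U.eval p1 y).Dom := Part.dom_iff_mem.mpr ⟨_, hp1⟩
    have d2 : (U.eval p2 y).Dom := Part.dom_iff_mem.mpr ⟨_, hp2⟩
    have e1 := U.prefixFree y [] p1 h d1 List.nil_prefix
    have e2 := U.prefixFree y [] p2 h d2 List.nil_prefix
    rw [← e1] at hp1
    rw [← e2] at hp2
    have := Part.mem_unique hp1 hp2
    simp at this
  -- complexities are positive
  have hKCpos : ∀ x y : List Bool, 1 ≤ U.KC x y := by
    intro x y
    obtain ⟨p, hp, hlen⟩ := U.exists_min x y
    by_contra h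
    push_neg at h
    have hp0 : p = [] := List.length_eq_zero_iff.mp (by omega)
    exact hnil y (hp0 ▸ Part.dom_iff_mem.mpr ⟨_, hp⟩)
  have hKle : ∀ (x y q : List Bool), x ∈ U.eval q y → U.KC x y ≤ q.length :=
    fun x y q h => Nat.sInf_le ⟨q, rfl, h⟩
  -- universality constants
  obtain ⟨c0, hc0⟩ := U.universal (NIDAux.Mg g) (NIDAux.Mg_partrec hg) (NIDAux.Mg_prefixFree g)
  obtain ⟨c1, hc1⟩ := U.universal (NIDAux.M1 U) (NIDAux.M1_partrec U) (NIDAux.M1_prefixFree U)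
  obtain ⟨c2, hc2⟩ := U.universal (NIDAux.M2 U) (NIDAux.M2_partrec U) (NIDAux.M2_prefixFree U)
  set B : ℕ := c0 + max c1 c2 with hB
  set k : ℕ := B + 2 with hk
  set n : ℕ := 2 ^ k with hn
  have hn1 : 1 ≤ n := Nat.one_le_two_pow
  obtain ⟨hlen, hnid⟩ := hprop n hn1
  set x : List Bool := (g n).1 with hx
  set y : List Bool := (g n).2 with hy
  set z : List Bool := x ++ y with hz
  -- K(z) ≤ k + 1 + c0
  have hKz : U.K z ≤ k + 1 + c0 := by
    obtain ⟨q, hq, hql⟩ := hc0 z [] (List.replicate k true ++ [false]) (NIDAux.Mg_mem g k [])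
    have h := hKle z [] q hq
    simp at hql
    show U.KC z [] ≤ k + 1 + c0
    omega
  -- z splits back into x and y
  have hhalf : z.length / 2 = x.length := by
    have : z.length = x.length + y.length := by simp [hz]
    omega
  have hzx : z.take (z.length / 2) = x := by
    rw [hhalf, hz, List.take_left]
  have hzy : z.drop (z.length / 2) = y := by
    rw [hhalf, hz, List.drop_left]
  -- K(x), K(y) ≤ K(z) + c
  obtain ⟨q0, hq0, hq0len⟩ := U.exists_min z []
  have hKx : U.K x ≤ U.K z + c1 := by
    have hmem : x ∈ NIDAux.M1 U q0 [] := by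
      rw [NIDAux.M1, ← hzx]
      exact Part.mem_map _ hq0
    obtain ⟨q, hq, hql⟩ := hc1 x [] q0 hmem
    have h := hKle x [] q hq
    show U.KC x [] ≤ U.KC z [] + c1
    rw [← hq0len]
    exact le_trans h hql
  have hKy : U.K y ≤ U.K z + c2 := by
    have hmem : y ∈ NIDAux.M2 U q0 [] := by
      rw [NIDAux.M2, ← hzy]
      exact Part.mem_map _ hq0
    obtain ⟨q, hq, hql⟩ := hc2 y [] q0 hmem
    have h := hKle y [] q hq
    show U.KC y [] ≤ U.KC z [] + c2
    rw [← hq0len]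
    exact le_trans h hql
  -- from NID < 1/n deduce n < max (K x) (K y)
  have hD1 : 1 ≤ max (U.K x) (U.K y) := le_trans (hKCpos x []) (le_max_left _ _)
  have hnD : n < max (U.K x) (U.K y) := by
    rw [PrefixUMachine.NID, ← Nat.cast_max, ← Nat.cast_max] at hnid
    have hDpos : (0 : ℚ) < ((max (U.K x) (U.K y) : ℕ) : ℚ) := by exact_mod_cast hD1
    have hnpos : (0 : ℚ) < (n : ℚ) := by exact_mod_cast hn1
    rw [div_lt_div_iff₀ hDpos hnpos] at hnid
    have hnum : (1 : ℚ) ≤ ((max (U.KC x y) (U.KC y x) : ℕ) : ℚ) := by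
      exact_mod_cast le_trans (hKCpos x y) (le_max_left _ _)
    have hle : (n : ℚ) ≤ ((max (U.KC x y) (U.KC y x) : ℕ) : ℚ) * (n : ℚ) :=
      le_mul_of_one_le_left (le_of_lt hnpos) hnum
    have h : (n : ℚ) < 1 * ((max (U.K x) (U.K y) : ℕ) : ℚ) := lt_of_le_of_lt hle hnid
    rw [one_mul] at h
    exact_mod_cast h
  -- conclude a contradiction
  have hDle : max (U.K x) (U.K y) ≤ k + 1 + c0 + max c1 c2 := by
    have h1 : U.K x ≤ k + 1 + c0 + max c1 c2 :=
      le_trans hKx (by have := le_max_left c1 c2; omega)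
    have h2 : U.K y ≤ k + 1 + c0 + max c1 c2 :=
      le_trans hKy (by have := le_max_right c1 c2; omega)
    exact max_le h1 h2
  have hpow : B < 2 ^ B := Nat.lt_two_pow_self
  have hpow2 : 2 ^ k = 4 * 2 ^ B := by rw [hk]; ring
  omega
end
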